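/- arXiv:1406.6576 — 6 statements merged into one kernel-verified Lean document; each statement's English description precedes it below -/
import Mathlib

section
/- Let I be an independent set of a tree T such that all tokens of I are (T,I)-movable, and let v ∉ I be a vertex. Then there is at most one neighbor w ∈ I ∩ N(v) such that the token on w is (T_w^v, I ∩ T_w^v)-rigid. -/
/-- `I` is an independent set of `G`. -/
def IndepSet {V : Type*} (G : SimpleGraph V) (I : Set V) : Prop :=
  ∀ ⦃u⦄, u ∈ I → ∀ ⦃v⦄, v ∈ I → ¬ G.Adj u v

/-- `B` is obtained from `A` by sliding one token along an edge. -/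
def Slide {V : Type*} (G : SimpleGraph V) (A B : Set V) : Prop :=
  ∃ u v, G.Adj u v ∧ A \ B = {u} ∧ B \ A = {v}

/-- One step of reconfiguration: a slide whose result is independent. -/
def Step {V : Type*} (G : SimpleGraph V) (A B : Set V) : Prop :=
  IndepSet G B ∧ Slide G A B

/-- `I` is reconfigurable to `J` by token sliding. -/
def Reconf {V : Type*} (G : SimpleGraph V) : Set V → Set V → Prop :=
  Relation.ReflTransGen (Step G)

/-- One reconfiguration step restricted to the induced subgraph on `S`. -/
def StepOn {V : Type*} (G : SimpleGraph V) (S : Set V) (A B : Set V) : Prop :=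
  B ⊆ S ∧ IndepSet G B ∧ Slide G A B

/-- Reconfigurability within the induced subgraph on `S`. -/
def ReconfOn {V : Type*} (G : SimpleGraph V) (S : Set V) : Set V → Set V → Prop :=
  Relation.ReflTransGen (StepOn G S)

/-- The token on `u` is `(G, I)`-rigid. -/
def Rigid {V : Type*} (G : SimpleGraph V) (I : Set V) (u : V) : Prop :=
  ∀ J, Reconf G I J → u ∈ J

/-- The token on `u` is rigid for the subgraph induced on `S`, starting from `I ∩ S`. -/
def RigidOn {V : Type*} (G : SimpleGraph V) (S I : Set V) (u : V) : Prop :=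
  ∀ J, ReconfOn G S (I ∩ S) J → u ∈ J

/-- The set `R(I)` of vertices carrying `(G, I)`-rigid tokens. -/
def RigidSet {V : Type*} (G : SimpleGraph V) (I : Set V) : Set V :=
  {u ∈ I | Rigid G I u}

/-- For an edge `{u, v}` of a tree `G`, `SubtreeSide G u v` is the vertex set of the
subtree `T_v^u`: the component of `v` after removing the edge, i.e. vertices strictly
closer to `v` than to `u`. -/
def SubtreeSide {V : Type*} (G : SimpleGraph V) (u v : V) : Set V :=
  {x | G.dist x v < G.dist x u}

/-- The closed neighborhood `N[R]` of a vertex subset `R`. -/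
def ClosedNbhd {V : Type*} (G : SimpleGraph V) (R : Set V) : Set V :=
  R ∪ {x | ∃ r ∈ R, G.Adj r x}

section Aux

variable {V : Type*} {G : SimpleGraph V}

private lemma dist_split {x v y : V}
    (p : G.Walk x v) (hp : p.length = G.dist x v) (hy : y ∈ p.support) :
    G.dist x y + G.dist y v ≤ G.dist x v := by
  classical
  calc G.dist x y + G.dist y v
      ≤ (p.takeUntil y hy).length + (p.dropUntil y hy).length :=
        Nat.add_le_add (SimpleGraph.dist_le _) (SimpleGraph.dist_le _)
    _ = p.length := by rw [← SimpleGraph.Walk.length_append, p.take_spec hy]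
    _ = G.dist x v := hp

private lemma concat_isPath {u w v : V}
    {q : G.Walk u w} (hq : q.IsPath) (h : G.Adj w v) (hv : v ∉ q.support) :
    (q.concat h).IsPath := by
  rw [← SimpleGraph.Walk.isPath_reverse_iff, SimpleGraph.Walk.reverse_concat]
  exact hq.reverse.cons (by simpa [SimpleGraph.Walk.support_reverse] using hv)

/-- The only edge of a tree crossing from `SubtreeSide G v w` to its complement
is the edge `{w, v}`. -/
private lemma cut_lemma (hT : G.IsTree) {v w u x : V}
    (hvw : G.Adj v w) (hux : G.Adj u x)
    (hu : G.dist u w < G.dist u v) (hx : ¬ G.dist x w < G.dist x v) :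
    u = w ∧ x = v := by
  have hc := hT.isConnected
  have hwv1 : G.dist w v = 1 := SimpleGraph.dist_eq_one_iff_adj.mpr hvw.symm
  have hux1 : G.dist u x = 1 := SimpleGraph.dist_eq_one_iff_adj.mpr hux
  have hxu1 : G.dist x u = 1 := SimpleGraph.dist_eq_one_iff_adj.mpr hux.symm
  have huv : G.dist u v = G.dist u w + 1 := by
    have h1 : G.dist u v ≤ G.dist u w + G.dist w v := hc.dist_triangle
    omega
  set a := G.dist u w with ha
  have hxw_le : G.dist x w ≤ a + 1 := by
    have := hc.dist_triangle (u := x) (v := u) (w := w); omega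
  have hxv_ge : a ≤ G.dist x v := by
    have := hc.dist_triangle (u := u) (v := x) (w := v); omega
  have hxv_le : G.dist x v ≤ G.dist x w := not_lt.mp hx
  -- a geodesic from u to w, extended by the edge w-v
  obtain ⟨q, hq, hql⟩ := hc.exists_path_of_dist u w
  have hvq : v ∉ q.support := by
    intro hmem
    have := dist_split q hql hmem
    omega
  have hP2 : (q.concat hvw.symm).IsPath := concat_isPath hq hvw.symm hvq
  rcases Nat.lt_or_ge (G.dist x v) (a + 1) with hcase | hcase
  · -- dist x v = a
    have hxv : G.dist x v = a := le_antisymm (by omega) hxv_ge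
    rcases Nat.eq_zero_or_pos a with h0 | hpos
    · constructor
      · exact (hc.dist_eq_zero_iff.mp (by omega))
      · exact (hc.dist_eq_zero_iff.mp (by omega))
    · exfalso
      obtain ⟨p, hp, hpl⟩ := hc.exists_path_of_dist x v
      have hup : u ∉ p.support := by
        intro hmem
        have := dist_split p hpl hmem
        omega
      have hP1 : (SimpleGraph.Walk.cons hux p).IsPath := hp.cons hup
      have heq : SimpleGraph.Walk.cons hux p = q.concat hvw.symm :=
        congrArg Subtype.val (hT.IsAcyclic.path_unique ⟨_, hP1⟩ ⟨_, hP2⟩)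
      have hwmem : w ∈ (SimpleGraph.Walk.cons hux p).support := by
        rw [heq, SimpleGraph.Walk.support_concat]
        simp only [List.concat_eq_append, List.mem_append]
        exact Or.inl (SimpleGraph.Walk.end_mem_support q)
      rw [SimpleGraph.Walk.support_cons] at hwmem
      rcases List.mem_cons.mp hwmem with h | h
      · have : G.dist u w = 0 := by rw [h, SimpleGraph.dist_self]
        omega
      · have := dist_split p hpl h
        omega
  · -- dist x v = a + 1 : two paths from u to v of different lengths
    exfalso
    have hxv : G.dist x v = a + 1 := le_antisymm (by omega) hcase
    obtain ⟨p, hp, hpl⟩ := hc.exists_path_of_dist x v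
    have hup : u ∉ p.support := by
      intro hmem
      have := dist_split p hpl hmem
      omega
    have hP1 : (SimpleGraph.Walk.cons hux p).IsPath := hp.cons hup
    have heq : SimpleGraph.Walk.cons hux p = q.concat hvw.symm :=
      congrArg Subtype.val (hT.IsAcyclic.path_unique ⟨_, hP1⟩ ⟨_, hP2⟩)
    have := congrArg SimpleGraph.Walk.length heq
    rw [SimpleGraph.Walk.length_cons, SimpleGraph.Walk.length_concat] at this
    omega

private lemma mem_side_self (hT : G.IsTree) {v w : V} (hvw : G.Adj v w) :
    w ∈ SubtreeSide G v w := by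
  have : G.dist w v = 1 := SimpleGraph.dist_eq_one_iff_adj.mpr hvw.symm
  simp [SubtreeSide, this]

private lemma sides_disjoint (hT : G.IsTree) {v w w' : V}
    (h1 : G.Adj v w) (h2 : G.Adj v w') (hne : w ≠ w') {x : V}
    (hx1 : x ∈ SubtreeSide G v w) (hx2 : x ∈ SubtreeSide G v w') : False := by
  have hc := hT.isConnected
  simp only [SubtreeSide, Set.mem_setOf_eq] at hx1 hx2
  have hwv1 : G.dist w v = 1 := SimpleGraph.dist_eq_one_iff_adj.mpr h1.symm
  have hw'v1 : G.dist w' v = 1 := SimpleGraph.dist_eq_one_iff_adj.mpr h2.symm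
  have hxv1 : G.dist x v ≤ G.dist x w + 1 := by
    have := hc.dist_triangle (u := x) (v := w) (w := v); omega
  have hxv2 : G.dist x v ≤ G.dist x w' + 1 := by
    have := hc.dist_triangle (u := x) (v := w') (w := v); omega
  obtain ⟨p, hp, hpl⟩ := hc.exists_path_of_dist x w
  obtain ⟨p', hp', hpl'⟩ := hc.exists_path_of_dist x w'
  have hvp : v ∉ p.support := by
    intro hmem; have := dist_split p hpl hmem; omega
  have hvp' : v ∉ p'.support := by
    intro hmem; have := dist_split p' hpl' hmem; omega
  have hP1 : (p.concat h1.symm).IsPath := concat_isPath hp h1.symm hvp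
  have hP2 : (p'.concat h2.symm).IsPath := concat_isPath hp' h2.symm hvp'
  have heq : p.concat h1.symm = p'.concat h2.symm :=
    congrArg Subtype.val (hT.IsAcyclic.path_unique ⟨_, hP1⟩ ⟨_, hP2⟩)
  have := congrArg (fun q => q.reverse.support) heq
  simp only [SimpleGraph.Walk.reverse_concat, SimpleGraph.Walk.support_cons] at this
  have htail := List.tail_eq_of_cons_eq this
  rw [SimpleGraph.Walk.support_eq_cons p.reverse, SimpleGraph.Walk.support_eq_cons p'.reverse]
    at htail
  exact hne (List.head_eq_of_cons_eq htail)

end Aux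
section Main

variable {V : Type*} {G : SimpleGraph V}

private lemma side_step (hT : G.IsTree) {v w w' : V}
    (hvw : G.Adj v w) (hvw' : G.Adj v w') (hne : w ≠ w') {I J K : Set V}
    (hrig : RigidOn G (SubtreeSide G v w) I w)
    (hw'J : w' ∈ J)
    (hrc : ReconfOn G (SubtreeSide G v w) (I ∩ SubtreeSide G v w) (J ∩ SubtreeSide G v w))
    (hstep : Step G J K) :
    ReconfOn G (SubtreeSide G v w) (I ∩ SubtreeSide G v w) (K ∩ SubtreeSide G v w) := by
  set S := SubtreeSide G v w with hS
  obtain ⟨hKind, u, x, hux, hJK, hKJ⟩ := hstep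
  have huJ : u ∈ J ∧ u ∉ K := by
    have := (Set.ext_iff.mp hJK u).mpr rfl; exact this
  have hxK : x ∈ K ∧ x ∉ J := by
    have := (Set.ext_iff.mp hKJ x).mpr rfl; exact this
  have hmemJK : ∀ y, y ≠ u → y ∈ J → y ∈ K := by
    intro y hy hyJ
    by_contra h
    exact hy ((Set.ext_iff.mp hJK y).mp ⟨hyJ, h⟩)
  have hmemKJ : ∀ y, y ≠ x → y ∈ K → y ∈ J := by
    intro y hy hyK
    by_contra h
    exact hy ((Set.ext_iff.mp hKJ y).mp ⟨hyK, h⟩)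
  by_cases hus : u ∈ S <;> by_cases hxs : x ∈ S
  · -- slide entirely inside S
    refine hrc.tail ⟨Set.inter_subset_right, fun a ha b hb => hKind ha.1 hb.1, u, x, hux, ?_, ?_⟩
    · have h1 : (J ∩ S) \ (K ∩ S) = (J \ K) ∩ S := by
        ext y; simp only [Set.mem_diff, Set.mem_inter_iff]; tauto
      rw [h1, hJK, Set.inter_eq_left.mpr (Set.singleton_subset_iff.mpr hus)]
    · have h1 : (K ∩ S) \ (J ∩ S) = (K \ J) ∩ S := by
        ext y; simp only [Set.mem_diff, Set.mem_inter_iff]; tauto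
      rw [h1, hKJ, Set.inter_eq_left.mpr (Set.singleton_subset_iff.mpr hxs)]
  · -- the token on w leaves S : then u = w, x = v, contradicting independence with w'
    exfalso
    obtain ⟨rfl, rfl⟩ := cut_lemma hT hvw hux hus hxs
    have hw'K : w' ∈ K := hmemJK w' (fun h => hne (h ▸ rfl)) hw'J
    exact hKind hxK.1 hw'K hvw'
  · -- a token enters S : then u = v, x = w, but w is already occupied
    exfalso
    obtain ⟨rfl, rfl⟩ := cut_lemma hT hvw hux.symm hxs hus
    exact hxK.2 (hrig _ hrc).1
  · -- slide entirely outside S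
    have : K ∩ S = J ∩ S := by
      ext y
      simp only [Set.mem_inter_iff]
      constructor
      · rintro ⟨hyK, hyS⟩
        exact ⟨hmemKJ y (fun h => hxs (h ▸ hyS)) hyK, hyS⟩
      · rintro ⟨hyJ, hyS⟩
        exact ⟨hmemJK y (fun h => hus (h ▸ hyS)) hyJ, hyS⟩
    rw [this]
    exact hrc

end Main
theorem atMostOne_rigid_neighbor {V : Type*} [Fintype V] (G : SimpleGraph V)
    (hT : G.IsTree) (I : Set V) (hI : IndepSet G I)
    (hmov : ∀ u ∈ I, ¬ Rigid G I u) (v : V) (hv : v ∉ I) :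
    {w : V | w ∈ I ∧ G.Adj v w ∧ RigidOn G (SubtreeSide G v w) I w}.Subsingleton := by
  intro w1 hw1 w2 hw2
  by_contra hne
  obtain ⟨hw1I, hadj1, hrig1⟩ := hw1
  obtain ⟨hw2I, hadj2, hrig2⟩ := hw2
  refine hmov w1 hw1I ?_
  have key : ∀ J, Reconf G I J →
      ReconfOn G (SubtreeSide G v w1) (I ∩ SubtreeSide G v w1) (J ∩ SubtreeSide G v w1) ∧
      ReconfOn G (SubtreeSide G v w2) (I ∩ SubtreeSide G v w2) (J ∩ SubtreeSide G v w2) := by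
    intro J hJ
    induction hJ with
    | refl => exact ⟨Relation.ReflTransGen.refl, Relation.ReflTransGen.refl⟩
    | tail hab hbc ih =>
      exact ⟨side_step hT hadj1 hadj2 hne hrig1 (hrig2 _ ih.2).1 ih.1 hbc,
             side_step hT hadj2 hadj1 (fun h => hne h.symm) hrig2 (hrig1 _ ih.1).1 ih.2 hbc⟩
  intro J hJ
  exact (hrig1 _ (key J hJ).1).1
end

section
/- Let I be an independent set of a tree T and suppose the token on x ∈ I is (T,I)-movable. Then for every vertex u ∈ I \ {x}, the token on u is (T,I)-rigid if and only if it is (T, I \ {x})-rigid. -/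
section Aux
open SimpleGraph
variable {V : Type*} {G : SimpleGraph V}

lemma tree_reach (hT : G.IsTree) (a b : V) : G.Reachable a b := hT.isConnected.preconnected a b

lemma tree_path_length (hT : G.IsTree) {a b : V} (p : G.Walk a b) (hp : p.IsPath) :
    p.length = G.dist a b := by
  obtain ⟨q, hq, hlen⟩ := (tree_reach hT a b).exists_path_of_dist
  have := (hT.existsUnique_path a b).unique hp hq
  rw [this, hlen]

lemma concat_isPath_s5 {a b c : V} {p : G.Walk a b} (hp : p.IsPath) (h : G.Adj b c)
    (hc : c ∉ p.support) : (p.concat h).IsPath := by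
  have : (p.concat h).reverse.IsPath := by
    rw [SimpleGraph.Walk.reverse_concat]
    exact (SimpleGraph.Walk.cons_isPath_iff _ _).2 ⟨hp.reverse, by simpa using hc⟩
  simpa only [SimpleGraph.Walk.reverse_reverse] using this.reverse

lemma tree_adj_dist (hT : G.IsTree) {v w : V} (hvw : G.Adj v w) (y : V) :
    G.dist y w = G.dist y v + 1 ∨ G.dist y v = G.dist y w + 1 := by
  classical
  obtain ⟨p, hp, hlen⟩ := (tree_reach hT y v).exists_path_of_dist
  by_cases hw : w ∈ p.support
  · right
    have ht : (p.takeUntil w hw).length = G.dist y w := tree_path_length hT _ (hp.takeUntil hw)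
    have hd : (p.dropUntil w hw).length = G.dist w v := tree_path_length hT _ (hp.dropUntil hw)
    have hsplit : (p.takeUntil w hw).length + (p.dropUntil w hw).length = p.length := by
      rw [← SimpleGraph.Walk.length_append, SimpleGraph.Walk.take_spec]
    have hwv : G.dist w v = 1 := by
      rw [SimpleGraph.dist_eq_one_iff_adj]; exact hvw.symm
    omega
  · left
    have hpath : (p.concat hvw).IsPath := concat_isPath_s5 hp hvw hw
    have := tree_path_length hT _ hpath
    rw [SimpleGraph.Walk.length_concat] at this
    omega

lemma mem_support_dist_le {a b y : V} (p : G.Walk a b) (hy : y ∈ p.support) :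
    G.dist y b ≤ p.length := by
  classical
  calc G.dist y b ≤ (p.dropUntil y hy).length := SimpleGraph.dist_le _
    _ ≤ p.length := by
        have : (p.takeUntil y hy).length + (p.dropUntil y hy).length = p.length := by
          rw [← SimpleGraph.Walk.length_append, SimpleGraph.Walk.take_spec]
        omega

lemma mem_support_dist_le' {a b y : V} (p : G.Walk a b) (hy : y ∈ p.support) :
    G.dist a y ≤ p.length := by
  classical
  calc G.dist a y ≤ (p.takeUntil y hy).length := SimpleGraph.dist_le _
    _ ≤ p.length := SimpleGraph.Walk.length_takeUntil_le p hy

/-- The only edge crossing between the two sides of a tree edge `(v,w)` is `(v,w)` itself. -/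
lemma tree_crossing (hT : G.IsTree) {v w y z : V} (hvw : G.Adj v w) (hyz : G.Adj y z)
    (hy : G.dist y w < G.dist y v) (hz : G.dist z v < G.dist z w) : y = w ∧ z = v := by
  classical
  have hy1 : G.dist y v = G.dist y w + 1 := by rcases tree_adj_dist hT hvw y with h | h <;> omega
  have hz1 : G.dist z w = G.dist z v + 1 := by rcases tree_adj_dist hT hvw z with h | h <;> omega
  have hyz1 : G.dist y z = 1 := SimpleGraph.dist_eq_one_iff_adj.2 hyz
  have hzy1 : G.dist z y = 1 := SimpleGraph.dist_eq_one_iff_adj.2 hyz.symm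
  have t1 : G.dist z w ≤ G.dist z y + G.dist y w := hT.isConnected.dist_triangle
  have t2 : G.dist y v ≤ G.dist y z + G.dist z v := hT.isConnected.dist_triangle
  have hm : G.dist y w = G.dist z v := by omega
  set m := G.dist z v with hmdef
  rcases Nat.eq_zero_or_pos m with h0 | hpos
  · have hzv : z = v := by
      have := (tree_reach hT z v).dist_eq_zero_iff.1 h0
      exact this
    have hyw : y = w := by
      have : G.dist y w = 0 := by omega
      exact (tree_reach hT y w).dist_eq_zero_iff.1 this
    exact ⟨hyw, hzv⟩
  · exfalso
    obtain ⟨Q, hQ, hQlen⟩ := (tree_reach hT z v).exists_path_of_dist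
    -- walk y → z → v
    have hynotQ : y ∉ Q.support := by
      intro hmem
      have := mem_support_dist_le Q hmem
      omega
    have hW : (SimpleGraph.Walk.cons hyz Q).IsPath :=
      (SimpleGraph.Walk.cons_isPath_iff _ _).2 ⟨hQ, hynotQ⟩
    obtain ⟨P, hP, hPlen⟩ := (tree_reach hT y w).exists_path_of_dist
    have hvnotP : v ∉ P.support := by
      intro hmem
      have := mem_support_dist_le' P hmem
      omega
    have hW2 : (P.concat hvw.symm).IsPath := concat_isPath_s5 hP hvw.symm hvnotP
    have heq : SimpleGraph.Walk.cons hyz Q = P.concat hvw.symm :=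
      (hT.existsUnique_path y v).unique hW hW2
    have hedge : s(w, v) ∈ (SimpleGraph.Walk.cons hyz Q).edges := by
      rw [heq, SimpleGraph.Walk.edges_concat]
      simp
    rw [SimpleGraph.Walk.edges_cons] at hedge
    rcases List.mem_cons.1 hedge with h | h
    · rw [Sym2.eq_iff] at h
      rcases h with ⟨h1, h2⟩ | ⟨h1, h2⟩
      · have : G.dist z v = 0 := by rw [h2]; exact SimpleGraph.dist_self
        omega
      · have : G.dist y v = 0 := by rw [h2]; exact SimpleGraph.dist_self
        omega
    · have hwQ : w ∈ Q.support := SimpleGraph.Walk.fst_mem_support_of_mem_edges Q h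
      have := mem_support_dist_le' Q hwQ
      omega


lemma indepSet_subset {A B : Set V} (hB : IndepSet G B) (h : A ⊆ B) : IndepSet G A :=
  fun _ ha _ hb => hB (h ha) (h hb)

lemma slide_facts {A B : Set V} {a b : V} (h1 : A \ B = {a}) (h2 : B \ A = {b}) :
    a ∈ A ∧ a ∉ B ∧ b ∈ B ∧ b ∉ A ∧ B = (A \ {a}) ∪ {b} := by
  have e1 := Set.ext_iff.mp h1
  have e2 := Set.ext_iff.mp h2
  simp only [Set.mem_diff, Set.mem_singleton_iff] at e1 e2
  refine ⟨(e1 a).2 rfl |>.1, (e1 a).2 rfl |>.2, (e2 b).2 rfl |>.1, (e2 b).2 rfl |>.2, ?_⟩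
  ext z
  simp only [Set.mem_union, Set.mem_diff, Set.mem_singleton_iff]
  constructor
  · intro hzB
    by_cases hzA : z ∈ A
    · exact Or.inl ⟨hzA, fun h => ((e1 z).2 h).2 hzB⟩
    · exact Or.inr ((e2 z).1 ⟨hzB, hzA⟩)
  · rintro (⟨hzA, hza⟩ | rfl)
    · by_contra hzB
      exact hza ((e1 z).1 ⟨hzA, hzB⟩)
    · exact ((e2 _).2 rfl).1

lemma reconfOn_indep {S A B : Set V} (h : ReconfOn G S A B) (hA : IndepSet G A) :
    IndepSet G B := by
  induction h with
  | refl => exact hA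
  | tail _ hstep ih => exact hstep.2.1

lemma reconfOn_sub {S A B : Set V} (h : ReconfOn G S A B) (hA : A ⊆ S) : B ⊆ S := by
  induction h with
  | refl => exact hA
  | tail _ hstep ih => exact hstep.1

/-- Token deletion: removing a (tracked) token from a reconfiguration sequence. -/
lemma reconfOn_delete {S A J : Set V} (h : ReconfOn G S A J) :
    ∀ p ∈ A, ∃ q ∈ J, ReconfOn G S (A \ {p}) (J \ {q}) := by
  induction h with
  | refl => exact fun p hp => ⟨p, hp, Relation.ReflTransGen.refl⟩
  | @tail J' J hchain hstep ih =>
    intro p hp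
    obtain ⟨q', hq', hrec⟩ := ih p hp
    obtain ⟨hJS, hJindep, a, b, hab, h1, h2⟩ := hstep
    obtain ⟨haJ', haJ, hbJ, hbJ', hBeq⟩ := slide_facts h1 h2
    by_cases hqa : q' = a
    · subst hqa
      refine ⟨b, hbJ, ?_⟩
      have : J \ {b} = J' \ {q'} := by
        rw [hBeq]; ext z
        simp only [Set.mem_diff, Set.mem_union, Set.mem_singleton_iff]
        constructor
        · rintro ⟨h | rfl, hzb⟩
          · exact h
          · exact absurd rfl hzb
        · rintro ⟨hz, hzq⟩
          exact ⟨Or.inl ⟨hz, hzq⟩, fun hzb => hbJ' (hzb ▸ hz)⟩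
      rw [this]; exact hrec
    · refine ⟨q', ?_, ?_⟩
      · rw [hBeq]; exact Or.inl ⟨hq', hqa⟩
      · refine hrec.tail ⟨?_, indepSet_subset hJindep Set.diff_subset, a, b, hab, ?_, ?_⟩
        · exact Set.diff_subset.trans hJS
        · have e1 : (J' \ {q'}) \ (J \ {q'}) = (J' \ J) \ {q'} := by
            ext z
            simp only [Set.mem_diff, Set.mem_singleton_iff]
            tauto
          rw [e1, h1]
          ext z; simp only [Set.mem_diff, Set.mem_singleton_iff]
          constructor
          · exact fun ⟨h, _⟩ => h
          · rintro rfl; exact ⟨rfl, fun e => hqa e.symm⟩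
        · have e2 : (J \ {q'}) \ (J' \ {q'}) = (J \ J') \ {q'} := by
            ext z
            simp only [Set.mem_diff, Set.mem_singleton_iff]
            tauto
          rw [e2, h2]
          ext z; simp only [Set.mem_diff, Set.mem_singleton_iff]
          constructor
          · exact fun ⟨h, _⟩ => h
          · rintro rfl; exact ⟨rfl, fun e => hbJ' (e ▸ hq')⟩

lemma mem_side {v w z : V} : z ∈ SubtreeSide G v w ↔ G.dist z w < G.dist z v := Iff.rfl

lemma not_mem_side (hT : G.IsTree) {v w : V} (hvw : G.Adj v w) {z : V} :
    z ∉ SubtreeSide G v w ↔ G.dist z v < G.dist z w := by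
  rw [mem_side]
  rcases tree_adj_dist hT hvw z with h | h <;> constructor <;> intro h' <;> omega

lemma side_self {v w : V} (hvw : G.Adj v w) : w ∈ SubtreeSide G v w := by
  rw [mem_side, SimpleGraph.dist_self, SimpleGraph.dist_eq_one_iff_adj.2 hvw.symm]
  omega

lemma v_not_side {v w : V} (hvw : G.Adj v w) : v ∉ SubtreeSide G v w := by
  rw [mem_side, SimpleGraph.dist_self, SimpleGraph.dist_eq_one_iff_adj.2 hvw]
  omega

lemma adj_side_eq (hT : G.IsTree) {v w z : V} (hvw : G.Adj v w)
    (hz : z ∈ SubtreeSide G v w) (hzv : G.Adj v z) : z = w := by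
  rw [mem_side] at hz
  rw [SimpleGraph.dist_eq_one_iff_adj.2 hzv.symm] at hz
  have : G.dist z w = 0 := by omega
  exact (tree_reach hT z w).dist_eq_zero_iff.1 this

lemma side_crossing (hT : G.IsTree) {v w y z : V} (hvw : G.Adj v w) (hyz : G.Adj y z)
    (hy : y ∈ SubtreeSide G v w) (hz : z ∉ SubtreeSide G v w) : y = w ∧ z = v := by
  rw [mem_side] at hy
  rw [not_mem_side hT hvw] at hz
  exact tree_crossing hT hvw hyz hy hz

lemma side_disjoint (hT : G.IsTree) {v w₁ w₂ z : V} (h1 : G.Adj v w₁) (h2 : G.Adj v w₂)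
    (hz1 : z ∈ SubtreeSide G v w₁) (hz2 : z ∈ SubtreeSide G v w₂) : w₁ = w₂ := by
  classical
  rw [mem_side] at hz1 hz2
  have e1 : G.dist z v = G.dist z w₁ + 1 := by
    rcases tree_adj_dist hT h1 z with h | h <;> omega
  have e2 : G.dist z v = G.dist z w₂ + 1 := by
    rcases tree_adj_dist hT h2 z with h | h <;> omega
  obtain ⟨P1, hP1, hP1len⟩ := (tree_reach hT z w₁).exists_path_of_dist
  obtain ⟨P2, hP2, hP2len⟩ := (tree_reach hT z w₂).exists_path_of_dist
  have hv1 : v ∉ P1.support := by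
    intro hmem; have := mem_support_dist_le' P1 hmem; omega
  have hv2 : v ∉ P2.support := by
    intro hmem; have := mem_support_dist_le' P2 hmem; omega
  have hW1 : (P1.concat h1.symm).IsPath := concat_isPath_s5 hP1 h1.symm hv1
  have hW2 : (P2.concat h2.symm).IsPath := concat_isPath_s5 hP2 h2.symm hv2
  have heq : P1.concat h1.symm = P2.concat h2.symm := (hT.existsUnique_path z v).unique hW1 hW2
  have hedge : s(w₁, v) ∈ (P2.concat h2.symm).edges := by
    rw [← heq, SimpleGraph.Walk.edges_concat]
    simp
  rw [SimpleGraph.Walk.edges_concat] at hedge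
  rw [List.concat_eq_append] at hedge
  rcases List.mem_append.1 hedge with h | h
  · exact absurd (SimpleGraph.Walk.snd_mem_support_of_mem_edges P2 h) hv2
  · simp only [List.mem_singleton, Sym2.eq_iff] at h
    rcases h with ⟨h', _⟩ | ⟨h', h''⟩
    · exact h'
    · exact absurd h' h1.ne'

lemma trunc1 {S J A : Set V} {u : V} (h : ReconfOn G S A J) (huJ : u ∉ J) :
    u ∈ A → ∃ B C, Relation.ReflTransGen (fun P Q => StepOn G S P Q ∧ u ∈ Q) A B ∧
      StepOn G S B C ∧ u ∈ B ∧ u ∉ C := by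
  induction h using Relation.ReflTransGen.head_induction_on with
  | refl => exact fun huA => absurd huA huJ
  | @head P Q hstep hchain ih =>
    intro huA
    by_cases huQ : u ∈ Q
    · obtain ⟨B, C, hc, hs, hB, hC⟩ := ih huQ
      exact ⟨B, C, hc.head ⟨hstep, huQ⟩, hs, hB, hC⟩
    · exact ⟨P, Q, Relation.ReflTransGen.refl, hstep, huA, huQ⟩

lemma trunc2 {S J A : Set V} {u x : V} (h : ReconfOn G S A J) (hJ : ¬(u ∈ J ∧ x ∈ J)) :
    u ∈ A → x ∈ A → ∃ B C, Relation.ReflTransGen (fun P Q => StepOn G S P Q ∧ u ∈ Q ∧ x ∈ Q) A B ∧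
      StepOn G S B C ∧ u ∈ B ∧ x ∈ B ∧ ¬(u ∈ C ∧ x ∈ C) := by
  induction h using Relation.ReflTransGen.head_induction_on with
  | refl => exact fun huA hxA => absurd ⟨huA, hxA⟩ hJ
  | @head P Q hstep hchain ih =>
    intro huA hxA
    by_cases hQ : u ∈ Q ∧ x ∈ Q
    · obtain ⟨B, C, hc, hs, hB, hB', hC⟩ := ih hQ.1 hQ.2
      exact ⟨B, C, hc.head ⟨hstep, hQ⟩, hs, hB, hB', hC⟩
    · exact ⟨P, Q, Relation.ReflTransGen.refl, hstep, huA, hxA, hQ⟩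

lemma keep_weaken {S A B : Set V} {u x : V}
    (h : Relation.ReflTransGen (fun P Q => StepOn G S P Q ∧ u ∈ Q ∧ x ∈ Q) A B) :
    Relation.ReflTransGen (fun P Q => StepOn G S P Q ∧ u ∈ Q) A B :=
  Relation.ReflTransGen.mono (fun _ _ h => ⟨h.1, h.2.1⟩) _ _ h

lemma keep_toReconf {S A B : Set V} {u : V}
    (h : Relation.ReflTransGen (fun P Q => StepOn G S P Q ∧ u ∈ Q) A B) :
    ReconfOn G S A B :=
  Relation.ReflTransGen.mono (fun _ _ h => h.1) _ _ h

/-- Extraction: a reconfiguration keeping a token on `u` (adjacent to `v`) restricts to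
each subtree side hanging off `v`. -/
lemma extract (hT : G.IsTree) {S : Set V} {u v w : V} (huv : G.Adj u v) (hvw : G.Adj v w)
    {A B : Set V} (hchain : Relation.ReflTransGen (fun P Q => StepOn G S P Q ∧ u ∈ Q) A B)
    (hA : IndepSet G A) (huA : u ∈ A) :
    ReconfOn G (S ∩ SubtreeSide G v w) (A ∩ SubtreeSide G v w) (B ∩ SubtreeSide G v w) ∧
      IndepSet G B ∧ u ∈ B := by
  induction hchain with
  | refl => exact ⟨Relation.ReflTransGen.refl, hA, huA⟩
  | tail hc hstep ih =>
    rename_i P Q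
    obtain ⟨hrec, hPindep, huP⟩ := ih
    obtain ⟨⟨hQS, hQindep, a, b, hab, h1, h2⟩, huQ⟩ := hstep
    obtain ⟨haP, haQ, hbQ, hbP, hQeq⟩ := slide_facts h1 h2
    have hvP : v ∉ P := fun hv => hPindep huP hv huv
    have hvQ : v ∉ Q := fun hv => hQindep huQ hv huv
    by_cases haside : a ∈ SubtreeSide G v w
    · by_cases hbside : b ∈ SubtreeSide G v w
      · refine ⟨hrec.tail ⟨?_, indepSet_subset hQindep Set.inter_subset_left, a, b, hab, ?_, ?_⟩,
          hQindep, huQ⟩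
        · exact Set.inter_subset_inter hQS (le_refl _)
        · have e : (P ∩ SubtreeSide G v w) \ (Q ∩ SubtreeSide G v w)
              = (P \ Q) ∩ SubtreeSide G v w := by
            ext z
            simp only [Set.mem_diff, Set.mem_inter_iff]
            tauto
          rw [e, h1]
          exact Set.inter_eq_self_of_subset_left (Set.singleton_subset_iff.2 haside)
        · have e : (Q ∩ SubtreeSide G v w) \ (P ∩ SubtreeSide G v w)
              = (Q \ P) ∩ SubtreeSide G v w := by
            ext z
            simp only [Set.mem_diff, Set.mem_inter_iff]
            tauto
          rw [e, h2]
          exact Set.inter_eq_self_of_subset_left (Set.singleton_subset_iff.2 hbside)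
      · have hc := side_crossing hT hvw hab haside hbside
        exact absurd (hc.2 ▸ hbQ) hvQ
    · by_cases hbside : b ∈ SubtreeSide G v w
      · have hc := side_crossing hT hvw hab.symm hbside haside
        exact absurd (hc.2 ▸ haP) hvP
      · have e : Q ∩ SubtreeSide G v w = P ∩ SubtreeSide G v w := by
          rw [hQeq]
          ext z
          simp only [Set.mem_inter_iff, Set.mem_union, Set.mem_diff, Set.mem_singleton_iff]
          constructor
          · rintro ⟨⟨hz, _⟩ | rfl, hside⟩
            · exact ⟨hz, hside⟩
            · exact absurd hside hbside
          · rintro ⟨hz, hside⟩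
            refine ⟨Or.inl ⟨hz, ?_⟩, hside⟩
            rintro rfl
            exact haside hside
        rw [e]
        exact ⟨hrec, hQindep, huQ⟩

/-- Lifting: a confined reconfiguration inside a subtree side lifts to the whole graph,
in the presence of an undisturbed outside token set `O`. -/
lemma lift (hT : G.IsTree) {S O : Set V} {v w : V} (hvw : G.Adj v w) (hO : IndepSet G O)
    (hOS : O ⊆ S) (hOside : ∀ z ∈ O, z ∉ SubtreeSide G v w) (hvO : v ∉ O)
    {P Q : Set V} (hchain : ReconfOn G (S ∩ SubtreeSide G v w) P Q)
    (hP : P ⊆ S ∩ SubtreeSide G v w) :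
    ReconfOn G S (O ∪ P) (O ∪ Q) := by
  induction hchain with
  | refl => exact Relation.ReflTransGen.refl
  | tail hc hstep ih =>
    rename_i P' Q'
    have hP' : P' ⊆ S ∩ SubtreeSide G v w := reconfOn_sub hc hP
    obtain ⟨hQ'S, hQ'indep, a, b, hab, h1, h2⟩ := hstep
    obtain ⟨haP, haQ, hbQ, hbP, hQeq⟩ := slide_facts h1 h2
    refine ih.tail ⟨?_, ?_, a, b, hab, ?_, ?_⟩
    · exact Set.union_subset hOS (hQ'S.trans Set.inter_subset_left)
    · intro z1 hz1 z2 hz2 hadj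
      rcases hz1 with hz1 | hz1 <;> rcases hz2 with hz2 | hz2
      · exact hO hz1 hz2 hadj
      · have := side_crossing hT hvw hadj.symm ((hQ'S hz2).2) (hOside _ hz1)
        exact hvO (this.2 ▸ hz1)
      · have := side_crossing hT hvw hadj ((hQ'S hz1).2) (hOside _ hz2)
        exact hvO (this.2 ▸ hz2)
      · exact hQ'indep hz1 hz2 hadj
    · have haO : a ∉ O := fun haO => hOside a haO ((hP' haP).2)
      ext z
      simp only [Set.mem_diff, Set.mem_union, Set.mem_singleton_iff]
      constructor
      · rintro ⟨hz | hz, hn⟩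
        · exact absurd (Or.inl hz) hn
        · have : z ∈ P' \ Q' := ⟨hz, fun h => hn (Or.inr h)⟩
          rw [h1] at this
          exact this
      · rintro rfl
        exact ⟨Or.inr haP, fun h => by
          rcases h with h | h
          · exact haO h
          · exact haQ h⟩
    · have hbO : b ∉ O := fun hbO => hOside b hbO ((hQ'S hbQ).2)
      ext z
      simp only [Set.mem_diff, Set.mem_union, Set.mem_singleton_iff]
      constructor
      · rintro ⟨hz | hz, hn⟩
        · exact absurd (Or.inl hz) hn
        · have : z ∈ Q' \ P' := ⟨hz, fun h => hn (Or.inr h)⟩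
          rw [h2] at this
          exact this
      · rintro rfl
        exact ⟨Or.inr hbQ, fun h => by
          rcases h with h | h
          · exact hbO h
          · exact hbP h⟩

lemma shape_indep (hT : G.IsTree) {A : Set V} {v : V} (hA : IndepSet G A) (hvA : v ∉ A)
    {F : Set V} (hF : ∀ w ∈ F, G.Adj v w) {J : V → Set V}
    (hJ : ∀ w ∈ F, IndepSet G (J w) ∧ J w ⊆ SubtreeSide G v w) :
    IndepSet G ((A \ ⋃ w ∈ F, SubtreeSide G v w) ∪ ⋃ w ∈ F, J w) := by
  intro z1 h1 z2 h2 hadj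
  simp only [Set.mem_union, Set.mem_diff, Set.mem_iUnion, exists_prop] at h1 h2
  rcases h1 with ⟨hz1A, hz1n⟩ | ⟨w1, hw1, hz1⟩ <;> rcases h2 with ⟨hz2A, hz2n⟩ | ⟨w2, hw2, hz2⟩
  · exact hA hz1A hz2A hadj
  · have hz1side : z1 ∉ SubtreeSide G v w2 := fun h => hz1n ⟨w2, hw2, h⟩
    have := side_crossing hT (hF w2 hw2) hadj.symm ((hJ w2 hw2).2 hz2) hz1side
    exact hvA (this.2 ▸ hz1A)
  · have hz2side : z2 ∉ SubtreeSide G v w1 := fun h => hz2n ⟨w1, hw1, h⟩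
    have := side_crossing hT (hF w1 hw1) hadj ((hJ w1 hw1).2 hz1) hz2side
    exact hvA (this.2 ▸ hz2A)
  · by_cases hww : w1 = w2
    · subst hww
      exact (hJ w1 hw1).1 hz1 hz2 hadj
    · have hz2side : z2 ∉ SubtreeSide G v w1 := fun h =>
        hww (side_disjoint hT (hF w1 hw1) (hF w2 hw2) h ((hJ w2 hw2).2 hz2))
      have := side_crossing hT (hF w1 hw1) hadj ((hJ w1 hw1).2 hz1) hz2side
      exact absurd (this.2 ▸ ((hJ w2 hw2).2 hz2)) (v_not_side (hF w2 hw2))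

lemma comp [Fintype V] (hT : G.IsTree) {S A : Set V} {u v : V} (huv : G.Adj u v)
    (hA : IndepSet G A) (hAS : A ⊆ S) (huA : u ∈ A) (hvS : v ∈ S)
    (hJex : ∀ w, G.Adj v w → w ∈ A → w ≠ u →
      ∃ Jw, ReconfOn G (S ∩ SubtreeSide G v w) (A ∩ SubtreeSide G v w) Jw ∧ w ∉ Jw) :
    ∃ C, ReconfOn G S A C ∧ u ∉ C := by
  classical
  have hvA : v ∉ A := fun h => hA huA h huv
  have hJex' : ∀ w : V, ∃ Jw, (G.Adj v w ∧ w ∈ A ∧ w ≠ u) →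
      ReconfOn G (S ∩ SubtreeSide G v w) (A ∩ SubtreeSide G v w) Jw ∧ w ∉ Jw := by
    intro w
    by_cases h : G.Adj v w ∧ w ∈ A ∧ w ≠ u
    · obtain ⟨Jw, h1, h2⟩ := hJex w h.1 h.2.1 h.2.2
      exact ⟨Jw, fun _ => ⟨h1, h2⟩⟩
    · exact ⟨∅, fun hh => absurd hh h⟩
  choose J hJ using hJex'
  set W0 : Set V := {w | G.Adj v w ∧ w ∈ A ∧ w ≠ u} with hW0
  have hJrec : ∀ w ∈ W0, ReconfOn G (S ∩ SubtreeSide G v w) (A ∩ SubtreeSide G v w) (J w) :=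
    fun w hw => (hJ w hw).1
  have hJnot : ∀ w ∈ W0, w ∉ J w := fun w hw => (hJ w hw).2
  have hJsub : ∀ w ∈ W0, J w ⊆ S ∩ SubtreeSide G v w := fun w hw =>
    reconfOn_sub (hJrec w hw) (Set.inter_subset_inter hAS (le_refl _))
  have hJindep : ∀ w ∈ W0, IndepSet G (J w) := fun w hw =>
    reconfOn_indep (hJrec w hw) (indepSet_subset hA Set.inter_subset_left)
  -- main induction over finitely many occupied neighbours of v
  have main : ∀ F : Finset V, ↑F ⊆ W0 → ∃ D, ReconfOn G S A D ∧
      D = (A \ ⋃ w ∈ (↑F : Set V), SubtreeSide G v w) ∪ ⋃ w ∈ (↑F : Set V), J w := by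
    intro F
    induction F using Finset.induction_on with
    | empty => exact fun _ => ⟨A, Relation.ReflTransGen.refl, by simp⟩
    | @insert w0 F hw0F ih =>
      intro hsub
      have hw0 : w0 ∈ W0 := hsub (by simp)
      have hFsub : ↑F ⊆ W0 := fun z hz => hsub (by simp [hz])
      obtain ⟨D, hD, hshape⟩ := ih hFsub
      have hvw0 : G.Adj v w0 := hw0.1
      have hsides : ∀ w ∈ (↑F : Set V), ∀ z, z ∈ SubtreeSide G v w → z ∉ SubtreeSide G v w0 := by
        intro w hw z hz hz0
        exact hw0F (by
          have := side_disjoint hT ((hFsub hw).1) hvw0 hz hz0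
          rwa [this] at hw)
      have hDindep : IndepSet G D := by
        rw [hshape]
        exact shape_indep hT hA hvA (fun w hw => (hFsub hw).1)
          (fun w hw => ⟨hJindep w (hFsub hw), (hJsub w (hFsub hw)).trans Set.inter_subset_right⟩)
      have hDS : D ⊆ S := by
        rw [hshape]
        refine Set.union_subset (Set.diff_subset.trans hAS) ?_
        exact Set.iUnion₂_subset fun w hw => (hJsub w (hFsub hw)).trans Set.inter_subset_left
      have hvD : v ∉ D := by
        rw [hshape]
        rintro (⟨h, _⟩ | h)
        · exact hvA h
        · simp only [Set.mem_iUnion, exists_prop] at h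
          obtain ⟨w, hw, hvJ⟩ := h
          exact v_not_side ((hFsub hw).1) ((hJsub w (hFsub hw)) hvJ).2
      -- D ∩ side w0 = A ∩ side w0
      have hDside : D ∩ SubtreeSide G v w0 = A ∩ SubtreeSide G v w0 := by
        rw [hshape]
        ext z
        simp only [Set.mem_inter_iff, Set.mem_union, Set.mem_diff, Set.mem_iUnion, exists_prop]
        constructor
        · rintro ⟨⟨hzA, _⟩ | ⟨w, hw, hz⟩, hside⟩
          · exact ⟨hzA, hside⟩
          · exact absurd hside (hsides w hw z ((hJsub w (hFsub hw)) hz).2)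
        · rintro ⟨hzA, hside⟩
          refine ⟨Or.inl ⟨hzA, ?_⟩, hside⟩
          rintro ⟨w, hw, hz⟩
          exact hsides w hw z hz hside
      set O : Set V := D \ SubtreeSide G v w0 with hO
      have hOD : O ∪ (A ∩ SubtreeSide G v w0) = D := by
        rw [← hDside, hO, Set.diff_union_inter]
      have hlift : ReconfOn G S D (O ∪ J w0) := by
        rw [← hOD]
        refine lift hT hvw0 (indepSet_subset hDindep Set.diff_subset)
          (Set.diff_subset.trans hDS) (fun z hz => hz.2) (fun hv => hvD hv.1) (hJrec w0 hw0) ?_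
        intro z hz
        exact ⟨hAS hz.1, hz.2⟩
      refine ⟨O ∪ J w0, hD.trans hlift, ?_⟩
      rw [hO, hshape]
      ext z
      simp only [Set.mem_union, Set.mem_diff, Set.mem_iUnion, exists_prop, Finset.coe_insert,
        Set.mem_insert_iff]
      constructor
      · rintro (⟨⟨hzA, hn⟩ | ⟨w, hw, hz⟩, hside⟩ | hz)
        · exact Or.inl ⟨hzA, by
            rintro ⟨w, hw | hw, hz⟩
            · exact hside (hw ▸ hz)
            · exact hn ⟨w, hw, hz⟩⟩
        · exact Or.inr ⟨w, Or.inr hw, hz⟩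
        · exact Or.inr ⟨w0, Or.inl rfl, hz⟩
      · rintro (⟨hzA, hn⟩ | ⟨w, hw | hw, hz⟩)
        · refine Or.inl ⟨Or.inl ⟨hzA, ?_⟩, ?_⟩
          · rintro ⟨w, hw, hz⟩
            exact hn ⟨w, Or.inr hw, hz⟩
          · intro hs
            exact hn ⟨w0, Or.inl rfl, hs⟩
        · exact Or.inr (hw ▸ hz)
        · exact Or.inl ⟨Or.inr ⟨w, hw, hz⟩,
            hsides w hw z ((hJsub w (hFsub hw)) hz).2⟩
  obtain ⟨D, hD, hshape⟩ := main (Set.toFinite W0).toFinset (Set.Finite.coe_toFinset _).subset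
  rw [Set.Finite.coe_toFinset] at hshape
  have huD : u ∈ D := by
    rw [hshape]
    refine Or.inl ⟨huA, ?_⟩
    intro hmem
    simp only [Set.mem_iUnion, exists_prop] at hmem
    obtain ⟨w, hw, hz⟩ := hmem
    exact hw.2.2 (adj_side_eq hT hw.1 hz huv.symm).symm
  have hvD : v ∉ D := by
    rw [hshape]
    rintro (⟨h, _⟩ | h)
    · exact hvA h
    · simp only [Set.mem_iUnion, exists_prop] at h
      obtain ⟨w, hw, hvJ⟩ := h
      exact v_not_side hw.1 ((hJsub w hw) hvJ).2
  have hDindep : IndepSet G D := by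
    rw [hshape]
    exact shape_indep hT hA hvA (fun w hw => hw.1)
      (fun w hw => ⟨hJindep w hw, (hJsub w hw).trans Set.inter_subset_right⟩)
  have hDS : D ⊆ S := by
    rw [hshape]
    refine Set.union_subset (Set.diff_subset.trans hAS) ?_
    exact Set.iUnion₂_subset fun w hw => (hJsub w hw).trans Set.inter_subset_left
  -- final slide u → v
  have hnadj : ∀ z ∈ D, z ≠ u → ¬G.Adj z v := by
    intro z hzD hzu hadj
    rw [hshape] at hzD
    rcases hzD with ⟨hzA, hn⟩ | hz
    · refine hn ?_
      simp only [Set.mem_iUnion, exists_prop]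
      exact ⟨z, ⟨hadj.symm, hzA, hzu⟩, side_self hadj.symm⟩
    · simp only [Set.mem_iUnion, exists_prop] at hz
      obtain ⟨w, hw, hz⟩ := hz
      have := side_crossing hT hw.1 hadj ((hJsub w hw hz)).2 (v_not_side hw.1)
      exact hJnot w hw (this.1 ▸ hz)
  refine ⟨(D \ {u}) ∪ {v}, hD.tail ⟨?_, ?_, u, v, huv, ?_, ?_⟩, ?_⟩
  · exact Set.union_subset (Set.diff_subset.trans hDS) (Set.singleton_subset_iff.2 hvS)
  · rintro z1 (⟨hz1, hz1u⟩ | rfl) z2 (⟨hz2, hz2u⟩ | rfl) hadj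
    · exact hDindep hz1 hz2 hadj
    · exact hnadj z1 hz1 hz1u hadj
    · exact hnadj z2 hz2 hz2u hadj.symm
    · exact (G.loopless.irrefl _) hadj
  · ext z
    simp only [Set.mem_diff, Set.mem_union, Set.mem_singleton_iff]
    constructor
    · rintro ⟨hz, hn⟩
      by_contra hzu
      exact hn (Or.inl ⟨hz, hzu⟩)
    · intro hz
      constructor
      · rw [hz]; exact huD
      · rw [hz]
        rintro (⟨_, h⟩ | h)
        · exact h rfl
        · exact huv.ne h
  · ext z
    simp only [Set.mem_diff, Set.mem_union, Set.mem_singleton_iff]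
    constructor
    · rintro ⟨⟨hz, _⟩ | rfl, hn⟩
      · exact absurd hz hn
      · rfl
    · intro hz
      rw [hz]
      exact ⟨Or.inr rfl, hvD⟩
  · rintro (⟨_, h⟩ | h)
    · exact h rfl
    · exact huv.ne (h : u = v)

lemma not_rigidOn_iff {S I : Set V} {u : V} :
    ¬RigidOn G S I u ↔ ∃ J, ReconfOn G S (I ∩ S) J ∧ u ∉ J := by
  unfold RigidOn
  push_neg
  rfl

lemma rigidOn_not_mem {S I : Set V} {u : V} (hu : u ∉ S) : ¬RigidOn G S I u :=
  fun h => hu (h (I ∩ S) Relation.ReflTransGen.refl).2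

lemma rigidOn_congr {S I I' : Set V} {u : V} (h : I ∩ S = I' ∩ S) :
    RigidOn G S I u ↔ RigidOn G S I' u := by
  unfold RigidOn
  rw [h]

lemma master [Fintype V] (hT : G.IsTree) :
    ∀ n : ℕ, ∀ S : Set V, S.ncard ≤ n → ∀ I : Set V, ∀ x u : V, IndepSet G I → x ∈ I →
      ¬ RigidOn G S I x → u ∈ I → u ≠ x →
      (RigidOn G S I u ↔ RigidOn G S (I \ {x}) u) := by
  intro n
  induction n with
  | zero =>
    intro S hS I x u _ _ _ _ _
    have hSempty : S = ∅ := (Set.ncard_eq_zero (Set.toFinite S)).1 (Nat.le_zero.1 hS)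
    have huS : u ∉ S := by rw [hSempty]; exact Set.notMem_empty u
    exact iff_of_false (rigidOn_not_mem huS) (rigidOn_not_mem huS)
  | succ n ih =>
    intro S hS I x u hI hxI hxmov huI hux
    by_cases huS : u ∈ S
    swap
    · exact iff_of_false (rigidOn_not_mem huS) (rigidOn_not_mem huS)
    by_cases hxS : x ∈ S
    swap
    · refine rigidOn_congr ?_
      ext z
      simp only [Set.mem_inter_iff, Set.mem_diff, Set.mem_singleton_iff]
      exact ⟨fun ⟨h1, h2⟩ => ⟨⟨h1, fun e => hxS (e ▸ h2)⟩, h2⟩, fun ⟨⟨h1, _⟩, h2⟩ => ⟨h1, h2⟩⟩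
    have hIS : IndepSet G (I ∩ S) := indepSet_subset hI Set.inter_subset_left
    constructor
    · -- hard direction
      intro hrig
      by_contra hnot
      obtain ⟨J₀, hchain0, huJ₀⟩ := not_rigidOn_iff.1 hnot
      have hA'eq : (I \ {x}) ∩ S = (I ∩ S) \ {x} := by
        ext z
        simp only [Set.mem_inter_iff, Set.mem_diff, Set.mem_singleton_iff]
        tauto
      have huA' : u ∈ (I \ {x}) ∩ S := ⟨⟨huI, hux⟩, huS⟩
      have hA'indep : IndepSet G ((I \ {x}) ∩ S) := indepSet_subset hI fun z hz => hz.1.1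
      obtain ⟨B, C, hkeep, hstep, huB, huC⟩ := trunc1 hchain0 huJ₀ huA'
      obtain ⟨hCS, hCindep, a, b, hab, h1, h2⟩ := hstep
      obtain ⟨haB, haC, hbC, hbB, hCeq⟩ := slide_facts h1 h2
      have hau : u = a := by
        have : u ∈ B \ C := ⟨huB, huC⟩
        rwa [h1, Set.mem_singleton_iff] at this
      subst hau
      set v := b with hv
      have huv : G.Adj u v := hab
      have hvS : v ∈ S := hCS hbC
      have hfree : ∀ z, z ∈ B → z ≠ u → ¬G.Adj z v := by
        intro z hzB hzu hadj
        have hzC : z ∈ C := by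
          rw [hCeq]
          exact Or.inl ⟨hzB, hzu⟩
        exact hCindep hzC hbC hadj
      -- the x-escaping chain
      obtain ⟨J₁, hchain1, hxJ₁⟩ := not_rigidOn_iff.1 hxmov
      obtain ⟨B₁, C₁, hkeep2, hstep1, huB₁, hxB₁, hnotC₁⟩ :=
        trunc2 hchain1 (fun h => hxJ₁ h.2) ⟨huI, huS⟩ ⟨hxI, hxS⟩
      by_cases huC₁ : u ∈ C₁
      swap
      · -- u moved first: u is movable in (S, I), contradiction with hrig
        have hchainC : ReconfOn G S (I ∩ S) C₁ :=
          (Relation.ReflTransGen.mono (fun _ _ h => h.1) _ _ hkeep2).tail hstep1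
        exact huC₁ (hrig C₁ hchainC)
      have hxC₁ : x ∉ C₁ := fun hx1 => hnotC₁ ⟨huC₁, hx1⟩
      have hxkeep : Relation.ReflTransGen (fun P Q => StepOn G S P Q ∧ u ∈ Q) (I ∩ S) C₁ :=
        (keep_weaken hkeep2).tail ⟨hstep1, huC₁⟩
      -- per-neighbour witnesses for comp
      have hJw : ∀ w, G.Adj v w → w ∈ I ∩ S → w ≠ u →
          ∃ Jw, ReconfOn G (S ∩ SubtreeSide G v w) ((I ∩ S) ∩ SubtreeSide G v w) Jw ∧ w ∉ Jw := by
        intro w hvw hwIS hwu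
        have hassoc : (I ∩ S) ∩ SubtreeSide G v w = I ∩ (S ∩ SubtreeSide G v w) :=
          Set.inter_assoc _ _ _
        have hassoc' : ((I \ {x}) ∩ S) ∩ SubtreeSide G v w
            = (I \ {x}) ∩ (S ∩ SubtreeSide G v w) := Set.inter_assoc _ _ _
        -- extraction from the u-witness chain
        obtain ⟨hrecU, hBindep, huB'⟩ := extract hT huv hvw hkeep hA'indep huA'
        have hwB : w ∉ B ∩ SubtreeSide G v w := by
          rintro ⟨hwB, _⟩
          exact hfree w hwB hwu hvw.symm
        have hnR' : ¬RigidOn G (S ∩ SubtreeSide G v w) (I \ {x}) w := by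
          rw [not_rigidOn_iff]
          exact ⟨B ∩ SubtreeSide G v w, by rwa [← hassoc'], hwB⟩
        by_cases hxside : x ∈ SubtreeSide G v w
        · -- x lives in this subtree side
          have hxmov' : ¬RigidOn G (S ∩ SubtreeSide G v w) I x := by
            obtain ⟨hrecX, _, _⟩ := extract hT huv hvw hxkeep hIS ⟨huI, huS⟩
            rw [not_rigidOn_iff]
            exact ⟨C₁ ∩ SubtreeSide G v w, by rwa [← hassoc], fun h => hxC₁ h.1⟩
          by_cases hwx : w = x
          · subst hwx
            obtain ⟨Jw, hJw1, hJw2⟩ := not_rigidOn_iff.1 hxmov'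
            exact ⟨Jw, by rwa [hassoc], hJw2⟩
          · -- recurse into the strictly smaller subtree side
            have hssub : S ∩ SubtreeSide G v w ⊂ S := by
              rw [Set.ssubset_iff_of_subset Set.inter_subset_left]
              exact ⟨v, hvS, fun h => v_not_side hvw h.2⟩
            have hcard : (S ∩ SubtreeSide G v w).ncard ≤ n := by
              have := Set.ncard_lt_ncard hssub (Set.toFinite S)
              omega
            have hiff := ih (S ∩ SubtreeSide G v w) hcard I x w hI hxI hxmov' hwIS.1 hwx
            have hnR : ¬RigidOn G (S ∩ SubtreeSide G v w) I w := fun h => hnR' (hiff.1 h)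
            obtain ⟨Jw, hJw1, hJw2⟩ := not_rigidOn_iff.1 hnR
            exact ⟨Jw, by rwa [hassoc], hJw2⟩
        · -- x is not in this side: the two token sets agree there
          have : I ∩ (S ∩ SubtreeSide G v w) = (I \ {x}) ∩ (S ∩ SubtreeSide G v w) := by
            ext z
            simp only [Set.mem_inter_iff, Set.mem_diff, Set.mem_singleton_iff]
            constructor
            · rintro ⟨h1, h2⟩
              exact ⟨⟨h1, fun e => hxside (e ▸ h2.2)⟩, h2⟩
            · rintro ⟨⟨h1, _⟩, h2⟩
              exact ⟨h1, h2⟩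
          have hnR : ¬RigidOn G (S ∩ SubtreeSide G v w) I w := fun h =>
            hnR' ((rigidOn_congr this).1 h)
          obtain ⟨Jw, hJw1, hJw2⟩ := not_rigidOn_iff.1 hnR
          exact ⟨Jw, by rwa [hassoc], hJw2⟩
      obtain ⟨C₂, hC₂, huC₂⟩ :=
        comp hT huv hIS Set.inter_subset_right ⟨huI, huS⟩ hvS hJw
      exact huC₂ (hrig C₂ hC₂)
    · -- easy direction: delete the token starting on x
      intro hrig' J hJ
      obtain ⟨q, hqJ, hdel⟩ := reconfOn_delete hJ x ⟨hxI, hxS⟩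
      have he : (I ∩ S) \ {x} = (I \ {x}) ∩ S := by
        ext z
        simp only [Set.mem_inter_iff, Set.mem_diff, Set.mem_singleton_iff]
        tauto
      rw [he] at hdel
      exact (hrig' _ hdel).1

lemma rigid_iff_rigidOn_univ {I : Set V} {w : V} :
    Rigid G I w ↔ RigidOn G Set.univ I w := by
  have hstep : ∀ A B : Set V, Step G A B ↔ StepOn G Set.univ A B :=
    fun A B => ⟨fun h => ⟨Set.subset_univ _, h.1, h.2⟩, fun h => ⟨h.2.1, h.2.2⟩⟩
  have hreconf : ∀ A B : Set V, Reconf G A B ↔ ReconfOn G Set.univ A B :=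
    fun A B => ⟨fun h => Relation.ReflTransGen.mono (fun P Q h => (hstep P Q).1 h) _ _ h,
      fun h => Relation.ReflTransGen.mono (fun P Q h => (hstep P Q).2 h) _ _ h⟩
  unfold Rigid RigidOn
  rw [Set.inter_univ]
  exact forall_congr' fun J => imp_congr_left (hreconf I J)

end Aux

theorem rigid_iff_rigid_of_remove_movable {V : Type*} [Fintype V] (G : SimpleGraph V)
    (hT : G.IsTree) (I : Set V) (hI : IndepSet G I) (x : V) (hx : x ∈ I)
    (hxmov : ¬ Rigid G I x) :
    ∀ u ∈ I \ {x}, (Rigid G I u ↔ Rigid G (I \ {x}) u) := by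
  intro u hu
  rw [rigid_iff_rigidOn_univ, rigid_iff_rigidOn_univ]
  refine master hT (Fintype.card V) Set.univ ?_ I x u hI hx ?_ hu.1 (fun e => hu.2 e)
  · rw [Set.ncard_univ, Nat.card_eq_fintype_card]
  · exact fun h => hxmov (rigid_iff_rigidOn_univ.2 h)
end

section
/- Let I_b and I_r be independent sets of a tree T with R(I_b) = R(I_r) =: R, and let F be the forest obtained from T by deleting the closed neighborhood N[R]. Then I_b ⇝ I_r in T if and only if I_b ∩ F ⇝ I_r ∩ F in F. -/
theorem reconf_iff_reconf_forest {V : Type*} [Fintype V] (G : SimpleGraph V)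
    (hT : G.IsTree) (Ib Ir : Set V) (hIb : IndepSet G Ib) (hIr : IndepSet G Ir)
    (hR : RigidSet G Ib = RigidSet G Ir)
    (S : Set V) (hS : S = (ClosedNbhd G (RigidSet G Ib))ᶜ) :
    Reconf G Ib Ir ↔ ReconfOn G S (Ib ∩ S) (Ir ∩ S) := by
  set R := RigidSet G Ib with hRdef
  have hRsubIb : R ⊆ Ib := fun u hu => hu.1
  have hRsubIr : R ⊆ Ir := fun u hu => by
    have : u ∈ RigidSet G Ir := hR ▸ hu
    exact this.1
  have hRrig : ∀ J, Reconf G Ib J → R ⊆ J := fun J hJ u hu => hu.2 J hJ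
  have hScompl : Sᶜ = ClosedNbhd G R := by rw [hS, compl_compl]
  have hRSc : R ⊆ Sᶜ := by rw [hScompl]; exact fun u hu => Or.inl hu
  -- for independent J containing R, J ∩ Sᶜ = R
  have hcap : ∀ J : Set V, IndepSet G J → R ⊆ J → J ∩ Sᶜ = R := by
    intro J hJind hRJ
    rw [hScompl]
    ext x
    constructor
    · rintro ⟨hxJ, hx | ⟨r, hr, hadj⟩⟩
      · exact hx
      · exact absurd hadj (hJind (hRJ hr) hxJ)
    · intro hx
      exact ⟨hRJ hx, Or.inl hx⟩
  have hmemS : ∀ J : Set V, IndepSet G J → R ⊆ J → ∀ x ∈ J, x ∉ R → x ∈ S := by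
    intro J hJind hRJ x hxJ hxR
    by_contra hxS
    exact hxR ((hcap J hJind hRJ) ▸ ⟨hxJ, hxS⟩ : x ∈ R)
  have hsplit : ∀ J : Set V, IndepSet G J → R ⊆ J → J = (J ∩ S) ∪ R := by
    intro J hJind hRJ
    conv_lhs => rw [← Set.inter_union_compl J S, hcap J hJind hRJ]
  constructor
  · -- forward direction
    intro h
    suffices H : ∀ J, Reconf G Ib J → IndepSet G J ∧ ReconfOn G S (Ib ∩ S) (J ∩ S) from
      (H Ir h).2
    intro J hJ
    induction hJ with
    | refl => exact ⟨hIb, Relation.ReflTransGen.refl⟩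
    | @tail b c hbc hstep ih =>
      obtain ⟨hIc, u, v, hadj, hbu, hcv⟩ := hstep
      have hRb : R ⊆ b := hRrig _ hbc
      have hRc : R ⊆ c := hRrig _ (hbc.tail ⟨hIc, u, v, hadj, hbu, hcv⟩)
      have hub : u ∈ b \ c := hbu ▸ rfl
      have hvc : v ∈ c \ b := hcv ▸ rfl
      have huR : u ∉ R := fun hu => hub.2 (hRc hu)
      have hvR : v ∉ R := fun hv => hvc.2 (hRb hv)
      have huS : u ∈ S := hmemS b ih.1 hRb u hub.1 huR
      have hvS : v ∈ S := hmemS c hIc hRc v hvc.1 hvR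
      refine ⟨hIc, ih.2.tail ⟨Set.inter_subset_right, fun x hx y hy => hIc hx.1 hy.1,
        u, v, hadj, ?_, ?_⟩⟩
      · ext x
        simp only [Set.mem_diff, Set.mem_inter_iff, Set.mem_singleton_iff, not_and]
        constructor
        · rintro ⟨⟨hxb, hxS⟩, hnc⟩
          have : x ∈ b \ c := ⟨hxb, fun hxc => hnc hxc hxS⟩
          rw [hbu] at this; exact this
        · rintro rfl
          exact ⟨⟨hub.1, huS⟩, fun hxc _ => hub.2 hxc⟩
      · ext x
        simp only [Set.mem_diff, Set.mem_inter_iff, Set.mem_singleton_iff, not_and]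
        constructor
        · rintro ⟨⟨hxc, hxS⟩, hnb⟩
          have : x ∈ c \ b := ⟨hxc, fun hxb => hnb hxb hxS⟩
          rw [hcv] at this; exact this
        · rintro rfl
          exact ⟨⟨hvc.1, hvS⟩, fun hxb _ => hvc.2 hxb⟩
  · -- backward direction
    intro h
    have hIbsplit : Ib = (Ib ∩ S) ∪ R := hsplit Ib hIb hRsubIb
    have hIrsplit : Ir = (Ir ∩ S) ∪ R := hsplit Ir hIr hRsubIr
    suffices H : ∀ J, ReconfOn G S (Ib ∩ S) J → J ⊆ S ∧ Reconf G Ib (J ∪ R) by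
      have := (H _ h).2
      rwa [← hIrsplit] at this
    intro J hJ
    induction hJ with
    | refl =>
      exact ⟨Set.inter_subset_right, by rw [← hIbsplit]; exact Relation.ReflTransGen.refl⟩
    | @tail b c hbc hstep ih =>
      obtain ⟨hcS, hIc, u, v, hadj, hbu, hcv⟩ := hstep
      have hbS : b ⊆ S := ih.1
      have hbR : ∀ x ∈ b, x ∉ R := fun x hx hxR => hRSc hxR (hbS hx)
      have hcR : ∀ x ∈ c, x ∉ R := fun x hx hxR => hRSc hxR (hcS hx)
      refine ⟨hcS, ih.2.tail ⟨?_, u, v, hadj, ?_, ?_⟩⟩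
      · -- independence of c ∪ R
        rintro x (hxc | hxR) y (hyc | hyR) hadjxy
        · exact hIc hxc hyc hadjxy
        · exact (by rw [hScompl]; exact Or.inr ⟨y, hyR, hadjxy.symm⟩ :
            x ∈ Sᶜ) (hcS hxc)
        · exact (by rw [hScompl]; exact Or.inr ⟨x, hxR, hadjxy⟩ :
            y ∈ Sᶜ) (hcS hyc)
        · exact hIb (hRsubIb hxR) (hRsubIb hyR) hadjxy
      · have : (b ∪ R) \ (c ∪ R) = b \ c := by
          ext x
          simp only [Set.mem_diff, Set.mem_union, not_or]
          constructor
          · rintro ⟨hx | hxR, hxc, hxR'⟩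
            · exact ⟨hx, hxc⟩
            · exact absurd hxR hxR'
          · rintro ⟨hxb, hxc⟩
            exact ⟨Or.inl hxb, hxc, hbR x hxb⟩
        rw [this, hbu]
      · have : (c ∪ R) \ (b ∪ R) = c \ b := by
          ext x
          simp only [Set.mem_diff, Set.mem_union, not_or]
          constructor
          · rintro ⟨hx | hxR, hxb, hxR'⟩
            · exact ⟨hx, hxb⟩
            · exact absurd hxR hxR'
          · rintro ⟨hxc, hxb⟩
            exact ⟨Or.inl hxc, hxb, hcR x hxc⟩
        rw [this, hcv]
end

section
/- Let I_b and I_r be independent sets of a tree T with R(I_b) = R(I_r), and let F be the forest obtained by deleting N[R(I_b)] from T. Then every token of I_b ∩ F is (F, I_b ∩ F)-movable, and every token of I_r ∩ F is (F, I_r ∩ F)-movable. -/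
lemma indep_of_reconf {V : Type*} (G : SimpleGraph V) {I J : Set V} (hI : IndepSet G I)
    (h : Reconf G I J) : IndepSet G J := by
  induction h with
  | refl => exact hI
  | tail _ hbc _ => exact hbc.1

lemma reconf_restrict {V : Type*} (G : SimpleGraph V) (I : Set V) (hI : IndepSet G I)
    (S : Set V) (hS : S = (ClosedNbhd G (RigidSet G I))ᶜ) :
    ∀ J, Reconf G I J → ReconfOn G S (I ∩ S) (J ∩ S) := by
  intro J h
  induction h with
  | refl => exact Relation.ReflTransGen.refl
  | @tail b c hab hbc ih =>
    have hIbI : IndepSet G b := indep_of_reconf G hI hab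
    have hIc : IndepSet G c := hbc.1
    have hRb : RigidSet G I ⊆ b := fun r hr => hr.2 b hab
    have hRc : RigidSet G I ⊆ c := fun r hr => hr.2 c (hab.tail hbc)
    obtain ⟨hc, u, v, hadj, hAB, hBA⟩ := hbc
    have hu : u ∈ b \ c := by rw [hAB]; rfl
    have hv : v ∈ c \ b := by rw [hBA]; rfl
    have huS : u ∈ S := by
      rw [hS]
      intro hmem
      simp only [ClosedNbhd, Set.mem_union, Set.mem_setOf_eq] at hmem
      rcases hmem with hmem | ⟨r, hr, hradj⟩
      · exact hu.2 (hRc hmem)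
      · exact hIbI (hRb hr) hu.1 hradj
    have hvS : v ∈ S := by
      rw [hS]
      intro hmem
      simp only [ClosedNbhd, Set.mem_union, Set.mem_setOf_eq] at hmem
      rcases hmem with hmem | ⟨r, hr, hradj⟩
      · exact hv.2 (hRb hmem)
      · exact hIc (hRc hr) hv.1 hradj
    refine ih.tail ⟨Set.inter_subset_right, fun x hx y hy => hIc hx.1 hy.1, u, v, hadj, ?_, ?_⟩
    · ext x
      simp only [Set.mem_diff, Set.mem_inter_iff, Set.mem_singleton_iff, not_and]
      constructor
      · rintro ⟨⟨hxb, hxS⟩, hx⟩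
        have hxd : x ∈ b \ c := ⟨hxb, fun hxc => hx hxc hxS⟩
        rw [hAB] at hxd; exact hxd
      · rintro rfl
        exact ⟨⟨hu.1, huS⟩, fun h _ => hu.2 h⟩
    · ext x
      simp only [Set.mem_diff, Set.mem_inter_iff, Set.mem_singleton_iff, not_and]
      constructor
      · rintro ⟨⟨hxc, hxS⟩, hx⟩
        have hxd : x ∈ c \ b := ⟨hxc, fun hxb => hx hxb hxS⟩
        rw [hBA] at hxd; exact hxd
      · rintro rfl
        exact ⟨⟨hv.1, hvS⟩, fun h _ => hv.2 h⟩

lemma not_rigidOn {V : Type*} (G : SimpleGraph V) (I : Set V) (hI : IndepSet G I)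
    (S : Set V) (hS : S = (ClosedNbhd G (RigidSet G I))ᶜ) :
    ∀ u ∈ I ∩ S, ¬ RigidOn G S I u := by
  intro u hu hrig
  have huS := hu.2
  have hnr : ¬ Rigid G I u := by
    intro h
    rw [hS] at huS
    exact huS (Set.mem_union_left _ ⟨hu.1, h⟩)
  unfold Rigid at hnr
  push_neg at hnr
  obtain ⟨J, hJ, huJ⟩ := hnr
  exact huJ (hrig (J ∩ S) (reconf_restrict G I hI S hS J hJ)).1

theorem movable_in_forest {V : Type*} [Fintype V] (G : SimpleGraph V)
    (hT : G.IsTree) (Ib Ir : Set V) (hIb : IndepSet G Ib) (hIr : IndepSet G Ir)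
    (hR : RigidSet G Ib = RigidSet G Ir)
    (S : Set V) (hS : S = (ClosedNbhd G (RigidSet G Ib))ᶜ) :
    (∀ u ∈ Ib ∩ S, ¬ RigidOn G S Ib u) ∧ (∀ u ∈ Ir ∩ S, ¬ RigidOn G S Ir u) := by
  constructor
  · exact not_rigidOn G Ib hIb S hS
  · have hS' : S = (ClosedNbhd G (RigidSet G Ir))ᶜ := by rw [hS, hR]
    exact not_rigidOn G Ir hIr S hS'
end

section
/- Let I_b and I_r be independent sets of a tree T such that all tokens of I_b are (T,I_b)-movable and all tokens of I_r are (T,I_r)-movable. Then I_b ⇝ I_r under token sliding if and only if |I_b| = |I_r|. -/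
namespace TS

open SimpleGraph Relation

variable {V : Type*} {G : SimpleGraph V} {S F A B I J K Dom : Set V} {x y z w c p u v : V}

/-! ### Basic reconfiguration lemmas -/

lemma slideSymm (h : Slide G A B) : Slide G B A := by
  obtain ⟨a, b, hadj, h1, h2⟩ := h
  exact ⟨b, a, hadj.symm, h2, h1⟩

lemma slide_ncard [Fintype V] (h : Slide G A B) : A.ncard = B.ncard := by
  classical
  obtain ⟨a, b, hadj, h1, h2⟩ := h
  have ha : a ∈ A \ B := h1 ▸ rfl
  have hb : b ∈ B \ A := h2 ▸ rfl
  have hA : A = insert a (A ∩ B) := by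
    ext t; constructor
    · intro ht
      by_cases htB : t ∈ B
      · exact Set.mem_insert_iff.2 (Or.inr ⟨ht, htB⟩)
      · have : t ∈ A \ B := ⟨ht, htB⟩
        rw [h1] at this; exact Set.mem_insert_iff.2 (Or.inl this)
    · intro ht
      rcases Set.mem_insert_iff.1 ht with rfl | ht
      · exact ha.1
      · exact ht.1
  have hB : B = insert b (A ∩ B) := by
    ext t; constructor
    · intro ht
      by_cases htA : t ∈ A
      · exact Set.mem_insert_iff.2 (Or.inr ⟨htA, ht⟩)
      · have : t ∈ B \ A := ⟨ht, htA⟩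
        rw [h2] at this; exact Set.mem_insert_iff.2 (Or.inl this)
    · intro ht
      rcases Set.mem_insert_iff.1 ht with rfl | ht
      · exact hb.1
      · exact ht.2
  have e1 : A.ncard = (A ∩ B).ncard + 1 := by
    conv_lhs => rw [hA]
    exact Set.ncard_insert_of_notMem (fun hc => ha.2 hc.2) (A ∩ B).toFinite
  have e2 : B.ncard = (A ∩ B).ncard + 1 := by
    conv_lhs => rw [hB]
    exact Set.ncard_insert_of_notMem (fun hc => hb.2 hc.1) (A ∩ B).toFinite
  omega

lemma reconfOn_indep (hI : IndepSet G I) (h : ReconfOn G S I J) : IndepSet G J := by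
  induction h with
  | refl => exact hI
  | tail _ hstep _ => exact hstep.2.1

lemma reconfOn_subset (hIS : I ⊆ S) (h : ReconfOn G S I J) : J ⊆ S := by
  induction h with
  | refl => exact hIS
  | tail _ hstep _ => exact hstep.1

lemma reconfOn_ncard [Fintype V] (h : ReconfOn G S I J) : I.ncard = J.ncard := by
  induction h with
  | refl => rfl
  | tail _ hstep ih => exact ih.trans (slide_ncard hstep.2.2)

lemma reconf_indep (hI : IndepSet G I) (h : Reconf G I J) : IndepSet G J := by
  induction h with
  | refl => exact hI
  | tail _ hstep _ => exact hstep.1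

lemma reconf_ncard [Fintype V] (h : Reconf G I J) : I.ncard = J.ncard := by
  induction h with
  | refl => rfl
  | tail _ hstep ih => exact ih.trans (slide_ncard hstep.2)

lemma stepOn_symm (hA : A ⊆ S) (hAind : IndepSet G A) (h : StepOn G S A B) :
    StepOn G S B A := ⟨hA, hAind, slideSymm h.2.2⟩

lemma reconfOn_symm (hI : IndepSet G I) (hIS : I ⊆ S) (h : ReconfOn G S I J) :
    ReconfOn G S J I := by
  induction h with
  | refl => exact .refl
  | tail hIK hstep ih =>
    exact ReflTransGen.head
      (stepOn_symm (reconfOn_subset hIS hIK) (reconfOn_indep hI hIK) hstep) ih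

lemma stepOn_univ_iff : StepOn G Set.univ A B ↔ Step G A B :=
  ⟨fun ⟨_, h1, h2⟩ => ⟨h1, h2⟩, fun ⟨h1, h2⟩ => ⟨Set.subset_univ _, h1, h2⟩⟩

lemma reconfOn_univ_iff : ReconfOn G Set.univ A B ↔ Reconf G A B := by
  constructor
  · intro h; exact ReflTransGen.mono (fun _ _ hs => stepOn_univ_iff.1 hs) _ _ h
  · intro h; exact ReflTransGen.mono (fun _ _ hs => stepOn_univ_iff.2 hs) _ _ h

lemma reconfOn_lift (hDS : Dom ⊆ S) (hFS : F ⊆ S) (hdisj : ∀ f ∈ F, f ∉ Dom)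
    (hFind : IndepSet G F) (hNoE : ∀ f ∈ F, ∀ d ∈ Dom, ¬ G.Adj f d)
    (hA : A ⊆ Dom) (h : ReconfOn G Dom A K) : ReconfOn G S (F ∪ A) (F ∪ K) := by
  induction h with
  | refl => exact .refl
  | @tail X Y hAX hstep ih =>
    refine ih.tail ?_
    have hXDom : X ⊆ Dom := reconfOn_subset hA hAX
    obtain ⟨hYS, hYind, a, b, hadj, h1, h2⟩ := hstep
    refine ⟨Set.union_subset hFS (fun t ht => hDS (hYS ht)), ?_, a, b, hadj, ?_, ?_⟩
    · intro s hs t ht hadj'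
      rcases hs with hs | hs
      · rcases ht with ht | ht
        · exact hFind hs ht hadj'
        · exact hNoE s hs t (hYS ht) hadj'
      · rcases ht with ht | ht
        · exact hNoE t ht s (hYS hs) hadj'.symm
        · exact hYind hs ht hadj'
    · ext t
      simp only [Set.mem_diff, Set.mem_union, Set.mem_singleton_iff]
      constructor
      · rintro ⟨hFX, hnot⟩
        push_neg at hnot
        rcases hFX with hF | hX
        · exact absurd hF hnot.1
        · have : t ∈ X \ Y := ⟨hX, hnot.2⟩
          rw [h1] at this; exact this
      · intro ht
        rw [← Set.mem_singleton_iff, ← h1] at ht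
        exact ⟨Or.inr ht.1, by
          push_neg
          exact ⟨fun hf => hdisj t hf (hXDom ht.1), ht.2⟩⟩
    · ext t
      simp only [Set.mem_diff, Set.mem_union, Set.mem_singleton_iff]
      constructor
      · rintro ⟨hFY, hnot⟩
        push_neg at hnot
        rcases hFY with hF | hY
        · exact absurd hF hnot.1
        · have : t ∈ Y \ X := ⟨hY, hnot.2⟩
          rw [h2] at this; exact this
      · intro ht
        rw [← Set.mem_singleton_iff, ← h2] at ht
        exact ⟨Or.inr ht.1, by
          push_neg
          exact ⟨fun hf => hdisj t hf (hYS ht.1), ht.2⟩⟩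

/-! ### Convexity -/

variable (G) in
/-- Geodesic convexity of a vertex subset. -/
def Conv (S : Set V) : Prop :=
  ∀ ⦃x⦄, x ∈ S → ∀ ⦃y⦄, y ∈ S → ∀ ⦃z : V⦄, G.dist x z + G.dist z y = G.dist x y → z ∈ S

lemma conv_univ : Conv G (Set.univ : Set V) := fun _ _ _ _ _ _ => trivial

lemma conv_inter {S T : Set V} (h1 : Conv G S) (h2 : Conv G T) : Conv G (S ∩ T) :=
  fun _ hx _ hy _ hz => ⟨h1 hx.1 hy.1 hz, h2 hx.2 hy.2 hz⟩

/-! ### Walk helpers -/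

lemma dcomm (a b : V) : G.dist a b = G.dist b a := SimpleGraph.dist_comm

lemma support_dist_le {p : G.Walk x y} (hu : u ∈ p.support) :
    G.dist x u + G.dist u y ≤ p.length := by
  classical
  have hsplit := p.take_spec hu
  have hlen : (p.takeUntil u hu).length + (p.dropUntil u hu).length = p.length := by
    rw [← Walk.length_append, hsplit]
  have h1 := SimpleGraph.dist_le (p.takeUntil u hu)
  have h2 := SimpleGraph.dist_le (p.dropUntil u hu)
  omega

lemma isPath_concat {p : G.Walk x y} (hp : p.IsPath) (hz : z ∉ p.support) (h : G.Adj y z) :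
    (p.concat h).IsPath := by
  rw [← Walk.isPath_reverse_iff, Walk.reverse_concat]
  refine Walk.IsPath.cons hp.reverse ?_
  rw [Walk.support_reverse]
  simpa using hz

/-! ### Tree lemmas -/

section Tree

variable (hT : G.IsTree)
include hT

lemma path_length_eq {p : G.Walk x y} (hp : p.IsPath) : p.length = G.dist x y := by
  obtain ⟨q, hq, hql⟩ := hT.isConnected.exists_path_of_dist x y
  rw [(hT.existsUnique_path x y).unique hp hq, hql]

lemma dist_zero_iff : G.dist x y = 0 ↔ x = y := hT.isConnected.dist_eq_zero_iff

lemma adj_dist_ne (hyw : G.Adj y w) (x : V) : G.dist x y ≠ G.dist x w := by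
  intro he
  obtain ⟨Q, hQ, hQl⟩ := hT.isConnected.exists_path_of_dist x w
  have hyw1 : G.dist y w = 1 := dist_eq_one_iff_adj.2 hyw
  by_cases hy : y ∈ Q.support
  · have h1 := support_dist_le (p := Q) hy
    omega
  · have hQ' : (Q.concat hyw.symm).IsPath := isPath_concat hQ hy hyw.symm
    have h2 := path_length_eq hT hQ'
    rw [Walk.length_concat] at h2
    omega

lemma adj_dist_le (hyw : G.Adj y w) (x : V) : G.dist x w ≤ G.dist x y + 1 := by
  have h1 := hT.isConnected.dist_triangle (u := x) (v := y) (w := w)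
  have h2 : G.dist y w = 1 := dist_eq_one_iff_adj.2 hyw
  omega

lemma mem_side_iff (hyw : G.Adj y w) :
    x ∈ SubtreeSide G y w ↔ G.dist x y = G.dist x w + 1 := by
  have h1 := adj_dist_le hT hyw.symm x
  constructor
  · intro hx
    have : G.dist x w < G.dist x y := hx
    omega
  · intro hx
    show G.dist x w < G.dist x y
    omega

lemma not_mem_side_iff (hyw : G.Adj y w) :
    x ∉ SubtreeSide G y w ↔ G.dist x w = G.dist x y + 1 := by
  have h1 := adj_dist_le hT hyw x
  have h2 := adj_dist_ne hT hyw x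
  constructor
  · intro hx
    have : ¬ G.dist x w < G.dist x y := hx
    omega
  · intro hx
    intro hmem
    have : G.dist x w < G.dist x y := hmem
    omega

lemma self_mem_side (hyw : G.Adj y w) : w ∈ SubtreeSide G y w := by
  show G.dist w w < G.dist w y
  rw [SimpleGraph.dist_self]
  exact hT.isConnected.pos_dist_of_ne (Ne.symm hyw.ne)

lemma base_not_mem_side (hyw : G.Adj y w) : y ∉ SubtreeSide G y w := by
  intro h
  have : G.dist y w < G.dist y y := h
  rw [SimpleGraph.dist_self] at this
  omega

lemma exists_first_step (hxy : x ≠ y) :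
    ∃ c, G.Adj x c ∧ G.dist c y + 1 = G.dist x y ∧ G.dist x c + G.dist c y = G.dist x y := by
  obtain ⟨p, hp, hpl⟩ := hT.isConnected.exists_path_of_dist x y
  cases p with
  | nil => exact absurd rfl hxy
  | @cons _ c _ h q =>
    have hq : q.IsPath := hp.of_cons
    have hql := path_length_eq hT hq
    have hlc : q.length + 1 = G.dist x y := by
      simpa using hpl
    have hadj : G.dist x c = 1 := dist_eq_one_iff_adj.2 h
    exact ⟨c, h, by omega, by omega⟩

lemma side_mem_path (hyw : G.Adj y w) : ∀ n x, G.dist x y ≤ n → x ∈ SubtreeSide G y w →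
    ∀ (q : G.Walk x y), q.IsPath → w ∈ q.support := by
  intro n
  induction n with
  | zero =>
    intro x hx hside q hq
    have : x = y := (dist_zero_iff hT).1 (by omega)
    subst this
    exact absurd hside (base_not_mem_side hT hyw)
  | succ n ih =>
    intro x hxn hside q hq
    by_cases hxw : x = w
    · subst hxw; exact q.start_mem_support
    have hxy : x ≠ y := by rintro rfl; exact base_not_mem_side hT hyw hside
    cases q with
    | nil => exact absurd rfl hxy
    | @cons _ c _ h q' =>
      have hq' : q'.IsPath := hq.of_cons
      have hxq' : x ∉ q'.support := ((Walk.cons_isPath_iff _ _).1 hq).2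
      have hlen : q'.length = G.dist c y := path_length_eq hT hq'
      have hlenq : q'.length + 1 = G.dist x y := by
        have := path_length_eq hT hq
        simpa using this
      by_cases hcside : c ∈ SubtreeSide G y w
      · by_cases hcw : c = w
        · subst hcw
          rw [Walk.support_cons]
          exact List.mem_cons_of_mem _ q'.start_mem_support
        · have : w ∈ q'.support := ih c (by omega) hcside q' hq'
          rw [Walk.support_cons]
          exact List.mem_cons_of_mem _ this
      · exfalso
        have hx1 : G.dist x y = G.dist x w + 1 := (mem_side_iff hT hyw).1 hside
        have hc1 : G.dist c w = G.dist c y + 1 := (not_mem_side_iff hT hyw).1 hcside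
        obtain ⟨gp, hgp, hgpl⟩ := hT.isConnected.exists_path_of_dist x w
        have hyw1 : G.dist y w = 1 := dist_eq_one_iff_adj.2 hyw
        have hyngp : y ∉ gp.support := by
          intro hy
          have := support_dist_le (p := gp) hy
          omega
        have hQ : (gp.concat hyw.symm).IsPath := isPath_concat hgp hyngp hyw.symm
        have hQeq : Walk.cons h q' = gp.concat hyw.symm :=
          (hT.existsUnique_path x y).unique hq hQ
        cases gp with
        | nil => exact hxw rfl
        | @cons _ c2 _ h2 gp' =>
          have hsup := congrArg Walk.support hQeq
          rw [Walk.support_cons, Walk.support_concat, Walk.support_cons] at hsup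
          have htails : q'.support = gp'.support.concat y := by
            simpa using hsup
          have hgp' : gp'.IsPath := hgp.of_cons
          have hlgp' : gp'.length = G.dist c2 w := path_length_eq hT hgp'
          have hlgp : gp'.length + 1 = G.dist x w := by
            simpa using hgpl
          have hcc2 : c = c2 := by
            have e1 := Walk.support_eq_cons q'
            have e2 := Walk.support_eq_cons gp'
            rw [e1, e2] at htails
            simp only [List.concat_cons] at htails
            exact (List.cons_eq_cons.mp htails).1
          subst hcc2
          omega

lemma nbr_mem_side (hyw : G.Adj y w) (hwz : G.Adj w z) (hzy : z ≠ y) :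
    z ∈ SubtreeSide G y w := by
  have hzw1 : G.dist z w = 1 := dist_eq_one_iff_adj.2 hwz.symm
  have hzy2 : G.dist z y = 2 := by
    have hne : ¬ G.Adj z y := by
      intro hzy'
      have := adj_dist_ne hT hyw z
      have d1 : G.dist z y = 1 := dist_eq_one_iff_adj.2 hzy'
      omega
    have hub : G.dist z y ≤ 2 := by
      have := hT.isConnected.dist_triangle (u := z) (v := w) (w := y)
      have : G.dist w y = 1 := dist_eq_one_iff_adj.2 hyw.symm
      omega
    have h0 : G.dist z y ≠ 0 := fun h => hzy ((dist_zero_iff hT).1 h)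
    have h1 : G.dist z y ≠ 1 := by
      intro h1; exact hne (dist_eq_one_iff_adj.1 h1)
    omega
  show G.dist z w < G.dist z y
  omega

lemma side_exit (hyw : G.Adj y w) (hz : z ∈ SubtreeSide G y w) (hz' : z' ∉ SubtreeSide G y w)
    (hzz' : G.Adj z z') : z = w ∧ z' = y := by
  have hz1 : G.dist z y = G.dist z w + 1 := (mem_side_iff hT hyw).1 hz
  have hz'1 : G.dist z' w = G.dist z' y + 1 := (not_mem_side_iff hT hyw).1 hz'
  -- adjacency relations
  have ha1 := adj_dist_le hT hzz' y  -- dist y z' ≤ dist y z + 1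
  have ha2 := adj_dist_le hT hzz'.symm y
  have ha3 := adj_dist_ne hT hzz' y
  have ha4 := adj_dist_le hT hzz' w
  rw [dcomm y z, dcomm y z'] at ha1 ha2 ha3
  rw [dcomm w z, dcomm w z'] at ha4
  -- conclude dist z' y = dist z y - 1
  have hd : G.dist z' y + 1 = G.dist z y := by omega
  by_cases hzw : z = w
  · subst hzw
    constructor
    · rfl
    · have : G.dist z y = 1 := by
        rw [dist_eq_one_iff_adj]; exact hyw.symm
      have : G.dist z' y = 0 := by omega
      exact (dist_zero_iff hT).1 this
  · exfalso
    obtain ⟨g, hg, hgl⟩ := hT.isConnected.exists_path_of_dist z' y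
    have hzng : z ∉ g.support := by
      intro hmem
      have := support_dist_le (p := g) hmem
      have : 0 < G.dist z' z := hT.isConnected.pos_dist_of_ne (Ne.symm hzz'.ne)
      omega
    have hR : (Walk.cons hzz' g).IsPath := hg.cons hzng
    have hmem := side_mem_path hT hyw (G.dist z y) z le_rfl hz (Walk.cons hzz' g) hR
    rw [Walk.support_cons] at hmem
    rcases List.mem_cons.1 hmem with rfl | hmem
    · exact hzw rfl
    · have := support_dist_le (p := g) hmem
      have hwy1 : G.dist w y = 1 := dist_eq_one_iff_adj.2 hyw.symm
      omega

lemma cross_dist_ge (hyw : G.Adj y w) :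
    ∀ n x, G.dist c x ≤ n → x ∈ SubtreeSide G y w → c ∉ SubtreeSide G y w →
    G.dist c y + 1 + G.dist w x ≤ G.dist c x := by
  intro n
  induction n with
  | zero =>
    intro x hn hx hc
    have : G.dist c x = 0 := by omega
    have : c = x := (dist_zero_iff hT).1 this
    subst this
    exact absurd hx hc
  | succ n ih =>
    intro x hn hx hc
    have hxc : x ≠ c := by rintro rfl; exact hc hx
    obtain ⟨c₁, hadj, hd1, hd2⟩ := exists_first_step hT hxc
    rw [dcomm x c] at hd1
    -- hd1 : dist c₁ c + 1 = dist c x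
    by_cases hc1 : c₁ ∈ SubtreeSide G y w
    · have hrec := ih c₁ (by rw [dcomm c c₁]; omega) hc1 hc
      rw [dcomm c c₁] at hrec
      -- hrec : dist c y + 1 + dist w c₁ ≤ dist c₁ c
      have htri := adj_dist_le hT hadj.symm w  -- dist w x ≤ dist w c₁ + 1
      omega
    · have hexit := side_exit hT hyw hx hc1 hadj
      have h9 : G.dist c w = G.dist c y + 1 := (not_mem_side_iff hT hyw).1 hc
      rw [hexit.1, SimpleGraph.dist_self]
      omega

lemma cross_dist (hyw : G.Adj y w) (hx : x ∈ SubtreeSide G y w) (hc : c ∉ SubtreeSide G y w) :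
    G.dist c x = G.dist c y + 1 + G.dist w x := by
  have h1 := cross_dist_ge hT hyw (G.dist c x) x le_rfl hx hc
  have h2 : G.dist c x ≤ G.dist c y + 1 + G.dist w x := by
    have t1 := hT.isConnected.dist_triangle (u := c) (v := y) (w := x)
    have t2 := hT.isConnected.dist_triangle (u := y) (v := w) (w := x)
    have : G.dist y w = 1 := dist_eq_one_iff_adj.2 hyw
    omega
  omega

lemma sibling_dist (hpw1 : G.Adj p w) (hpw2 : G.Adj p z) (hne : w ≠ z) :
    G.dist w z = 2 := by
  have h0 : G.dist w z ≠ 0 := fun h => hne ((dist_zero_iff hT).1 h)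
  have h1 : G.dist w z ≠ 1 := by
    intro h1
    have hadj : G.Adj w z := dist_eq_one_iff_adj.1 h1
    have := adj_dist_ne hT hadj p
    have e1 : G.dist p w = 1 := dist_eq_one_iff_adj.2 hpw1
    have e2 : G.dist p z = 1 := dist_eq_one_iff_adj.2 hpw2
    omega
  have h2 : G.dist w z ≤ 2 := by
    have := hT.isConnected.dist_triangle (u := w) (v := p) (w := z)
    have e1 : G.dist w p = 1 := dist_eq_one_iff_adj.2 hpw1.symm
    have e2 : G.dist p z = 1 := dist_eq_one_iff_adj.2 hpw2
    omega
  omega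

lemma side_disjoint (hpw1 : G.Adj p w) (hpw2 : G.Adj p z) (hne : w ≠ z) :
    ∀ x, x ∈ SubtreeSide G p w → x ∉ SubtreeSide G p z := by
  intro x hx1 hx2
  have hz1 : z ∉ SubtreeSide G p w := by
    rw [not_mem_side_iff hT hpw1]
    have h5 := sibling_dist hT hpw1 hpw2 hne
    rw [dcomm z w, dcomm z p]
    have h6 : G.dist p z = 1 := dist_eq_one_iff_adj.2 hpw2
    omega
  have hcd := cross_dist hT hpw1 hx1 hz1
  -- dist z x = dist z p + 1 + dist w x = 2 + dist w x
  have e2 : G.dist z p = 1 := dist_eq_one_iff_adj.2 hpw2.symm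
  have m1 : G.dist x p = G.dist x w + 1 := (mem_side_iff hT hpw1).1 hx1
  have m2 : G.dist x p = G.dist x z + 1 := (mem_side_iff hT hpw2).1 hx2
  rw [dcomm z x, dcomm w x] at hcd
  omega

lemma path3_dist (hab : G.Adj x y) (hbc : G.Adj y z) (hcd : G.Adj z w)
    (hxz : x ≠ z) (hyw : y ≠ w) (hxw : x ≠ w) : G.dist x w = 3 := by
  have hP : (Walk.cons hab (Walk.cons hbc (Walk.cons hcd Walk.nil))).IsPath := by
    simp [Walk.cons_isPath_iff, hxz, hyw, hxw, hab.ne, hbc.ne, hcd.ne]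
  have := path_length_eq hT hP
  simpa using this.symm

lemma side_nested (hyw : G.Adj y w) (hwz : G.Adj w z) (hzy : z ≠ y)
    (hzw' : G.Adj z w') (hw'w : w' ≠ w) :
    SubtreeSide G z w' ⊆ SubtreeSide G y w := by
  intro x hx
  -- y ∉ side z w'
  have hyz2 : G.dist y z = 2 := by
    have h5 := sibling_dist hT hwz hyw.symm hzy
    rwa [dcomm z y] at h5
  have hyw'3 : G.dist y w' = 3 := by
    have hne1 : y ≠ w' := by
      intro h; subst h
      have : G.dist y z = 1 := dist_eq_one_iff_adj.2 hzw'.symm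
      omega
    exact path3_dist hT hyw hwz hzw' (Ne.symm hzy) (Ne.symm hw'w) hne1
  have hyout : y ∉ SubtreeSide G z w' := by
    intro h
    have : G.dist y w' < G.dist y z := h
    omega
  have hwout : w ∉ SubtreeSide G z w' := by
    rw [not_mem_side_iff hT hzw']
    have h1 : G.dist w z = 1 := dist_eq_one_iff_adj.2 hwz
    have h2 : G.dist w w' = 2 := sibling_dist hT hwz.symm hzw' (Ne.symm hw'w)
    omega
  have hcy := cross_dist hT hzw' hx hyout
  have hcw := cross_dist hT hzw' hx hwout
  rw [mem_side_iff hT hyw]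
  have e1 : G.dist w z = 1 := dist_eq_one_iff_adj.2 hwz
  rw [dcomm y x] at hcy
  rw [dcomm w x] at hcw
  omega

lemma side_conv (hyw : G.Adj y w) : Conv G (SubtreeSide G y w) := by
  intro x1 hx1 x2 hx2 m hm
  by_contra hmout
  have hc1 := cross_dist hT hyw hx1 hmout
  have hc2 := cross_dist hT hyw hx2 hmout
  have htri := hT.isConnected.dist_triangle (u := x1) (v := w) (w := x2)
  rw [dcomm m x1] at hc1
  rw [dcomm x1 w] at htri
  omega

end Tree

/-! ### Lock certificates and rigidity -/

variable (G) in
/-- Self-locking set of (direction, token) pairs. -/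
def selfLock (S I : Set V) (P : Set (V × V)) : Prop :=
  ∀ q ∈ P, q.2 ∈ I ∧ q.2 ∈ S ∧ G.Adj q.1 q.2 ∧
    ∀ z ∈ S, G.Adj q.2 z → z ≠ q.1 → ∃ w', w' ≠ q.2 ∧ (z, w') ∈ P

variable (G) in
/-- The token on `w` is locked into the subtree on the far side of `y` from within `S`. -/
def LockedOn (S I : Set V) (y w : V) : Prop :=
  ∃ P, selfLock G S I P ∧ (y, w) ∈ P

variable (G) in
/-- Rigidity for the `S`-restricted dynamics started at `I` itself. -/
def RigidA (S I : Set V) (x : V) : Prop := ∀ J, ReconfOn G S I J → x ∈ J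

variable (G) in
/-- Successor relation between lock pairs inside a pair set `P`. -/
def succRel (P : Set (V × V)) (q q' : V × V) : Prop :=
  q' ∈ P ∧ G.Adj q.2 q'.1 ∧ q'.1 ≠ q.1 ∧ q'.2 ≠ q.2

lemma rigidA_congr (hI : IndepSet G I) (hIS : I ⊆ S) (h : ReconfOn G S I I') :
    RigidA G S I x ↔ RigidA G S I' x := by
  constructor
  · intro hr J hJ
    exact hr J (h.trans hJ)
  · intro hr J hJ
    exact hr J ((reconfOn_symm hI hIS h).trans hJ)

lemma lockedOn_unfold (h : LockedOn G S I y w) :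
    w ∈ I ∧ w ∈ S ∧ G.Adj y w ∧
      ∀ z ∈ S, G.Adj w z → z ≠ y → ∃ w', w' ≠ w ∧ LockedOn G S I z w' := by
  obtain ⟨P, hP, hmem⟩ := h
  obtain ⟨h1, h2, h3, h4⟩ := hP _ hmem
  exact ⟨h1, h2, h3, fun z hz hadj hne => by
    obtain ⟨w', hw1, hw2⟩ := h4 z hz hadj hne
    exact ⟨w', hw1, P, hP, hw2⟩⟩

lemma lockedOn_fold (h1 : w ∈ I) (h2 : w ∈ S) (h3 : G.Adj y w)
    (h4 : ∀ z ∈ S, G.Adj w z → z ≠ y → ∃ w', w' ≠ w ∧ LockedOn G S I z w') :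
    LockedOn G S I y w := by
  refine ⟨{q | q = (y, w) ∨ LockedOn G S I q.1 q.2}, ?_, Or.inl rfl⟩
  rintro ⟨a, b⟩ (heq | hlock)
  · rw [Prod.mk.injEq] at heq
    obtain ⟨rfl, rfl⟩ := heq
    refine ⟨h1, h2, h3, ?_⟩
    intro z hz ha hn
    obtain ⟨w', hw1, hw2⟩ := h4 z hz ha hn
    exact ⟨w', hw1, Or.inr hw2⟩
  · obtain ⟨h1', h2', h3', h4'⟩ := lockedOn_unfold hlock
    refine ⟨h1', h2', h3', ?_⟩
    intro z hz ha hn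
    obtain ⟨w', hw1, hw2⟩ := h4' z hz ha hn
    exact ⟨w', hw1, Or.inr hw2⟩

lemma reach_mem {P : Set (V × V)} {r q : V × V} (hr : r ∈ P)
    (h : Relation.ReflTransGen (succRel G P) r q) : q ∈ P := by
  induction h with
  | refl => exact hr
  | tail _ hstep _ => exact hstep.1

lemma lockedOn_congr {I' : Set V} (hT : G.IsTree) (h : LockedOn G S I p w)
    (heq : I ∩ SubtreeSide G p w = I' ∩ SubtreeSide G p w) : LockedOn G S I' p w := by
  obtain ⟨P, hP, hroot⟩ := h
  have hpw : G.Adj p w := (hP _ hroot).2.2.1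
  refine ⟨{q | q ∈ P ∧ Relation.ReflTransGen (succRel G P) (p, w) q ∧
      SubtreeSide G q.1 q.2 ⊆ SubtreeSide G p w}, ?_, ⟨hroot, .refl, subset_rfl⟩⟩
  rintro ⟨a, b⟩ ⟨hmem, hreach, hsub⟩
  obtain ⟨h1, h2, h3, h4⟩ := hP _ hmem
  refine ⟨?_, h2, h3, ?_⟩
  · have hb : b ∈ I ∩ SubtreeSide G p w := ⟨h1, hsub (self_mem_side hT h3)⟩
    rw [heq] at hb
    exact hb.1
  · intro z hz hadj hne
    obtain ⟨w', hw1, hw2⟩ := h4 z hz hadj hne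
    have hadj' : G.Adj z w' := (hP _ hw2).2.2.1
    refine ⟨w', hw1, hw2, hreach.tail ⟨hw2, hadj, hne, hw1⟩, ?_⟩
    exact (side_nested hT h3 hadj hne hadj' hw1).trans hsub

variable (G) in
/-- An invariant certificate showing tokens can never move. -/
def GoodSet (S J : Set V) (P : Set (V × V)) : Prop :=
  ∀ q ∈ P, q.2 ∈ J ∧ G.Adj q.1 q.2 ∧
    (∀ z ∈ S, G.Adj q.2 z → z ≠ q.1 → ∃ w', w' ≠ q.2 ∧ (z, w') ∈ P) ∧
    (∃ pr, pr ≠ q.2 ∧ G.Adj q.1 pr ∧ ∃ c, (c, pr) ∈ P)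

lemma goodSet_step {P : Set (V × V)} (hstep : StepOn G S A B) (hA : GoodSet G S A P) :
    GoodSet G S B P := by
  obtain ⟨hBS, hBind, a, b, hadj, h1, h2⟩ := hstep
  have hb : b ∈ B := by
    have : b ∈ B \ A := h2 ▸ rfl
    exact this.1
  have hsub : ∀ t ∈ A, t ≠ a → t ∈ B := by
    intro t ht hta
    by_contra htB
    have : t ∈ A \ B := ⟨ht, htB⟩
    rw [h1] at this
    exact hta this
  have hkey : ∀ q ∈ P, q.2 ≠ a := by
    rintro ⟨yq, wq⟩ hq heq
    simp only at heq
    subst heq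
    obtain ⟨hwA, hadjq, hsucc, pr, hpr1, hpr2, c, hprP⟩ := hA _ hq
    by_cases hby : b = yq
    · subst hby
      have hprA : pr ∈ A := (hA _ hprP).1
      have hprB : pr ∈ B := hsub pr hprA hpr1
      exact hBind hb hprB hpr2
    · obtain ⟨w', hw1, hw2⟩ := hsucc b (hBS hb) hadj (hby)
      have hwA' : w' ∈ A := (hA _ hw2).1
      have hwB' : w' ∈ B := hsub w' hwA' hw1
      exact hBind hb hwB' (hA _ hw2).2.1
  intro q hq
  obtain ⟨hwA, hadjq, hsucc, hpr⟩ := hA _ hq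
  exact ⟨hsub _ hwA (hkey _ hq), hadjq, hsucc, hpr⟩

lemma goodSet_reconf {P : Set (V × V)} (h : ReconfOn G S I J) (hI : GoodSet G S I P) :
    GoodSet G S J P := by
  induction h with
  | refl => exact hI
  | tail _ hstep ih => exact goodSet_step hstep ih

lemma goodSet_rigid {P : Set (V × V)} (hI : GoodSet G S I P) (hroot : (y, x) ∈ P) :
    RigidA G S I x :=
  fun _ hJ => (goodSet_reconf hJ hI _ hroot).1

lemma selfLock_union {P Q : Set (V × V)} (hP : selfLock G S I P) (hQ : selfLock G S I Q) :
    selfLock G S I (P ∪ Q) := by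
  rintro q (hq | hq)
  · obtain ⟨h1, h2, h3, h4⟩ := hP _ hq
    exact ⟨h1, h2, h3, fun z hz ha hn => by
      obtain ⟨w', hw1, hw2⟩ := h4 z hz ha hn
      exact ⟨w', hw1, Or.inl hw2⟩⟩
  · obtain ⟨h1, h2, h3, h4⟩ := hQ _ hq
    exact ⟨h1, h2, h3, fun z hz ha hn => by
      obtain ⟨w', hw1, hw2⟩ := h4 z hz ha hn
      exact ⟨w', hw1, Or.inr hw2⟩⟩

lemma two_roots {w1 w2 : V} (hL1 : LockedOn G S I p w1) (hL2 : LockedOn G S I p w2)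
    (hne : w1 ≠ w2) : RigidA G S I w1 ∧ RigidA G S I w2 := by
  obtain ⟨P1, hP1, hr1⟩ := hL1
  obtain ⟨P2, hP2, hr2⟩ := hL2
  set P := P1 ∪ P2 with hPdef
  have hP : selfLock G S I P := selfLock_union hP1 hP2
  set Q : Set (V × V) := {q | q ∈ P ∧ (Relation.ReflTransGen (succRel G P) (p, w1) q ∨
    Relation.ReflTransGen (succRel G P) (p, w2) q)} with hQdef
  have hr1P : (p, w1) ∈ P := Or.inl hr1
  have hr2P : (p, w2) ∈ P := Or.inr hr2
  have hr1Q : (p, w1) ∈ Q := ⟨hr1P, Or.inl .refl⟩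
  have hr2Q : (p, w2) ∈ Q := ⟨hr2P, Or.inr .refl⟩
  have hgood : GoodSet G S I Q := by
    rintro q ⟨hqP, hreach⟩
    obtain ⟨h1, h2, h3, h4⟩ := hP _ hqP
    refine ⟨h1, h3, ?_, ?_⟩
    · intro z hz ha hn
      obtain ⟨w', hw1, hw2⟩ := h4 z hz ha hn
      refine ⟨w', hw1, hw2, ?_⟩
      rcases hreach with hr | hr
      · exact Or.inl (hr.tail ⟨hw2, ha, hn, hw1⟩)
      · exact Or.inr (hr.tail ⟨hw2, ha, hn, hw1⟩)
    · rcases hreach with hr | hr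
      · rcases hr.cases_tail with heq | ⟨q0, hq0, hstep⟩
        · refine heq ▸ ⟨w2, Ne.symm hne, (hP _ hr2P).2.2.1, p, hr2Q⟩
        · exact ⟨q0.2, Ne.symm hstep.2.2.2, hstep.2.1.symm, q0.1, reach_mem hr1P hq0, Or.inl hq0⟩
      · rcases hr.cases_tail with heq | ⟨q0, hq0, hstep⟩
        · refine heq ▸ ⟨w1, hne, (hP _ hr1P).2.2.1, p, hr1Q⟩
        · exact ⟨q0.2, Ne.symm hstep.2.2.2, hstep.2.1.symm, q0.1, reach_mem hr2P hq0, Or.inr hq0⟩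
  exact ⟨goodSet_rigid hgood hr1Q, goodSet_rigid hgood hr2Q⟩

variable (G) in
/-- A rigidity certificate for the token on `x`. -/
def Cert (S I : Set V) (x : V) : Prop :=
  x ∈ I ∧ ∀ y ∈ S, G.Adj x y → ∃ w, w ≠ x ∧ LockedOn G S I y w

lemma no_nbr_rigid (hx : x ∈ I) (hnb : ∀ y ∈ S, ¬ G.Adj x y) : RigidA G S I x := by
  intro J hJ
  induction hJ with
  | refl => exact hx
  | @tail X Y hIX hstep ih =>
    obtain ⟨hYS, hYind, a, b, hadj, h1, h2⟩ := hstep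
    by_contra hxY
    have hxa : x ∈ X \ Y := ⟨ih, hxY⟩
    rw [h1] at hxa
    have hb : b ∈ Y := by
      have : b ∈ Y \ X := h2 ▸ rfl
      exact this.1
    exact hnb b (hYS hb) (hxa ▸ hadj)

lemma cert_rigid (hc : Cert G S I x) : RigidA G S I x := by
  by_cases hnb : ∃ y ∈ S, G.Adj x y
  · obtain ⟨y0, hy0S, hy0adj⟩ := hnb
    set PL : Set (V × V) := {q | LockedOn G S I q.1 q.2} with hPLdef
    have hPL : selfLock G S I PL := by
      rintro q hq
      obtain ⟨h1, h2, h3, h4⟩ := lockedOn_unfold hq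
      exact ⟨h1, h2, h3, fun z hz ha hn => by
        obtain ⟨w', hw1, hw2⟩ := h4 z hz ha hn
        exact ⟨w', hw1, hw2⟩⟩
    set Q : Set (V × V) := {q | (q.2 = x ∧ q.1 ∈ S ∧ G.Adj x q.1) ∨
      (q ∈ PL ∧ ∃ y w, y ∈ S ∧ G.Adj x y ∧ w ≠ x ∧ LockedOn G S I y w ∧
        Relation.ReflTransGen (succRel G PL) (y, w) q)} with hQdef
    have hgood : GoodSet G S I Q := by
      rintro ⟨a, b⟩ (⟨hbx, haS, hadj⟩ | ⟨hqPL, y, w, hyS, hxyadj, hwx, hLyw, hreach⟩)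
      · simp only at hbx
        subst hbx
        refine ⟨hc.1, hadj.symm, ?_, ?_⟩
        · intro z hz ha hn
          obtain ⟨w, hw1, hw2⟩ := hc.2 z hz ha
          exact ⟨w, hw1, Or.inr ⟨hw2, z, w, hz, ha, hw1, hw2, .refl⟩⟩
        · obtain ⟨w, hw1, hw2⟩ := hc.2 a haS hadj
          exact ⟨w, hw1, (lockedOn_unfold hw2).2.2.1, a, Or.inr ⟨hw2, a, w, haS, hadj, hw1, hw2, .refl⟩⟩
      · obtain ⟨h1, h2, h3, h4⟩ := hPL _ hqPL
        refine ⟨h1, h3, ?_, ?_⟩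
        · intro z hz ha hn
          obtain ⟨w', hw1, hw2⟩ := h4 z hz ha hn
          exact ⟨w', hw1, Or.inr ⟨hw2, y, w, hyS, hxyadj, hwx, hLyw, hreach.tail ⟨hw2, ha, hn, hw1⟩⟩⟩
        · rcases hreach.cases_tail with heq | ⟨q0, hq0, hstep⟩
          · have hax : (a, b) = (y, w) := heq
            rw [Prod.mk.injEq] at hax
            refine ⟨x, ?_, ?_, y0, Or.inl ⟨rfl, hy0S, hy0adj⟩⟩
            · rw [hax.2]; exact Ne.symm hwx
            · rw [hax.1]; exact hxyadj.symm
          · have hq0PL : q0 ∈ PL := reach_mem hLyw hq0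
            exact ⟨q0.2, Ne.symm hstep.2.2.2, hstep.2.1.symm, q0.1,
              Or.inr ⟨hq0PL, y, w, hyS, hxyadj, hwx, hLyw, hq0⟩⟩
    exact goodSet_rigid hgood (Or.inl ⟨rfl, hy0S, hy0adj⟩ : (y0, x) ∈ Q)
  · push_neg at hnb
    exact no_nbr_rigid hc.1 hnb

/-! ### Escaping unlocked tokens -/

section Escape

variable (hT : G.IsTree)
include hT

lemma adj_mem_side_eq {t : V} (hadj : G.Adj z t) (h : t ∈ SubtreeSide G z w) : t = w := by
  have h1 : G.dist t z = 1 := dist_eq_one_iff_adj.2 hadj.symm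
  have h2 : G.dist t w < G.dist t z := h
  exact (dist_zero_iff hT).1 (by omega)

lemma sibling_not_mem_side {w' : V} (h1 : G.Adj z w) (h2 : G.Adj z w') (hne : w ≠ w') :
    w ∉ SubtreeSide G z w' := by
  intro h
  have hd := sibling_dist hT h1 h2 hne
  have h3 : G.dist w z = 1 := dist_eq_one_iff_adj.2 h1.symm
  have h4 : G.dist w w' < G.dist w z := h
  omega

lemma chain_escape {R A0 : Set V} (W : Finset V)
    (hRS : R ⊆ S) (hA0 : A0 ⊆ R) (hA0ind : IndepSet G A0) (hpA : p ∉ A0)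
    (hW : ∀ w ∈ W, w ∈ A0 ∧ G.Adj p w ∧ ¬ LockedOn G S A0 p w)
    (hsc : ∀ w ∈ W, SubtreeSide G p w ∩ S ⊆ R)
    (hesc : ∀ (J : Set V) (w : V), w ∈ W → IndepSet G J → J ⊆ R → w ∈ J →
      J ∩ SubtreeSide G p w = A0 ∩ SubtreeSide G p w →
      ∃ K, ReconfOn G (SubtreeSide G p w ∩ S) (J ∩ SubtreeSide G p w) K ∧ w ∉ K) :
    ∃ J, ReconfOn G R A0 J ∧ (∀ w ∈ W, w ∉ J) ∧
      (∀ t, t ∉ (⋃ w ∈ (W : Set V), SubtreeSide G p w) → (t ∈ J ↔ t ∈ A0)) := by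
  classical
  induction W using Finset.induction_on with
  | empty => exact ⟨A0, .refl, by simp, fun t _ => Iff.rfl⟩
  | @insert w0 W hw0 ih =>
    obtain ⟨J, hJr, hJW, hJU⟩ := ih
      (fun w hw => hW w (Finset.mem_insert_of_mem hw))
      (fun w hw => hsc w (Finset.mem_insert_of_mem hw))
      (fun J w hw => hesc J w (Finset.mem_insert_of_mem hw))
    obtain ⟨hw0A, hw0adj, hw0nl⟩ := hW w0 (Finset.mem_insert_self w0 W)
    have hJR : J ⊆ R := reconfOn_subset hA0 hJr
    have hJind : IndepSet G J := reconfOn_indep hA0ind hJr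
    have hdisj0 : ∀ w ∈ W, ∀ t, t ∈ SubtreeSide G p w0 → t ∉ SubtreeSide G p w := by
      intro w hw t ht
      exact fun hmem => side_disjoint hT (hW w (Finset.mem_insert_of_mem hw)).2.1 hw0adj
        (fun h => hw0 (h ▸ hw)) t hmem ht
    have hw0notU : ∀ t, t ∈ SubtreeSide G p w0 → t ∉ ⋃ w ∈ (W : Set V), SubtreeSide G p w := by
      intro t ht hmem
      simp only [Set.mem_iUnion, exists_prop] at hmem
      obtain ⟨w, hwW, hmem⟩ := hmem
      exact hdisj0 w hwW t ht hmem
    have hw0side : w0 ∈ SubtreeSide G p w0 := self_mem_side hT hw0adj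
    have hw0J : w0 ∈ J := (hJU w0 (hw0notU w0 hw0side)).2 hw0A
    have hsideeq : J ∩ SubtreeSide G p w0 = A0 ∩ SubtreeSide G p w0 := by
      ext t
      simp only [Set.mem_inter_iff]
      constructor
      · rintro ⟨htJ, hts⟩
        exact ⟨(hJU t (hw0notU t hts)).1 htJ, hts⟩
      · rintro ⟨htA, hts⟩
        exact ⟨(hJU t (hw0notU t hts)).2 htA, hts⟩
    obtain ⟨K, hKr, hw0K⟩ := hesc J w0 (Finset.mem_insert_self w0 W) hJind hJR hw0J hsideeq
    set D := SubtreeSide G p w0 ∩ S with hD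
    have hpJ : p ∉ J := by
      have := hJU p (by
        intro hmem
        simp only [Set.mem_iUnion, exists_prop] at hmem
        obtain ⟨w, hwW, hmem⟩ := hmem
        exact base_not_mem_side hT (hW w (Finset.mem_insert_of_mem hwW)).2.1 hmem)
      exact fun hp => hpA (this.1 hp)
    have hJDeq : J ∩ SubtreeSide G p w0 = J ∩ D := by
      ext t
      simp only [hD, Set.mem_inter_iff]
      exact ⟨fun ⟨h1, h2⟩ => ⟨h1, h2, hRS (hJR h1)⟩, fun ⟨h1, h2, _⟩ => ⟨h1, h2⟩⟩
    have hstart : J ∩ SubtreeSide G p w0 ⊆ D := fun t ht => ⟨ht.2, hRS (hJR ht.1)⟩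
    have hKD : K ⊆ D := reconfOn_subset hstart hKr
    have hnoE : ∀ f ∈ J \ D, ∀ d ∈ D, ¬ G.Adj f d := by
      intro f hf d hd hadj
      have hfS : f ∈ S := hRS (hJR hf.1)
      have hfside : f ∉ SubtreeSide G p w0 := fun hfs => hf.2 ⟨hfs, hfS⟩
      have hexit := side_exit hT hw0adj hd.1 hfside hadj.symm
      exact hpJ (hexit.2 ▸ hf.1)
    have hlift := reconfOn_lift (S := R) (hsc w0 (Finset.mem_insert_self w0 W))
      (fun f hf => hJR hf.1) (fun f hf hfD => hf.2 hfD)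
      (fun a ha b hb => hJind ha.1 hb.1) hnoE hstart hKr
    have hJeq : (J \ D) ∪ (J ∩ SubtreeSide G p w0) = J := by
      rw [hJDeq]
      ext t
      simp only [Set.mem_union, Set.mem_diff, Set.mem_inter_iff]
      tauto
    rw [hJeq] at hlift
    refine ⟨(J \ D) ∪ K, hJr.trans hlift, ?_, ?_⟩
    · intro w hw
      rcases Finset.mem_insert.1 hw with rfl | hw
      · rintro (hmem | hmem)
        · exact hmem.2 ⟨hw0side, hRS (hJR hw0J)⟩
        · exact hw0K hmem
      · rintro (hmem | hmem)
        · exact hJW w hw hmem.1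
        · exact hdisj0 w hw w (hKD hmem).1
            (self_mem_side hT (hW w (Finset.mem_insert_of_mem hw)).2.1)
    · intro t ht
      simp only [Finset.coe_insert, Set.mem_iUnion, exists_prop, Set.mem_insert_iff,
        not_exists, not_and] at ht
      have htw0 : t ∉ SubtreeSide G p w0 := ht w0 (Or.inl rfl)
      have htW : t ∉ ⋃ w ∈ (W : Set V), SubtreeSide G p w := by
        simp only [Set.mem_iUnion, exists_prop, not_exists, not_and]
        intro w hw
        exact ht w (Or.inr hw)
      have htD : t ∉ D := fun hd => htw0 hd.1
      constructor
      · rintro (hmem | hmem)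
        · exact (hJU t htW).1 hmem.1
        · exact ((htD (hKD hmem)).elim)
      · intro htA
        exact Or.inl ⟨(hJU t htW).2 htA, htD⟩

lemma escape_lemma [Fintype V] : ∀ (n : ℕ) (S I : Set V) (y w : V),
    (SubtreeSide G y w ∩ S).ncard ≤ n →
    Conv G S → IndepSet G I → I ⊆ S → w ∈ I → G.Adj y w → ¬ LockedOn G S I y w →
    ∃ K, ReconfOn G (SubtreeSide G y w ∩ S) (I ∩ SubtreeSide G y w) K ∧ w ∉ K := by
  classical
  intro n
  induction n with
  | zero =>
    intro S I y w hn _ _ hIS hwI hyw _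
    exfalso
    have hmem : w ∈ SubtreeSide G y w ∩ S := ⟨self_mem_side hT hyw, hIS hwI⟩
    have h0 : (SubtreeSide G y w ∩ S).ncard = 0 := by omega
    rw [Set.ncard_eq_zero (Set.toFinite _)] at h0
    rw [h0] at hmem
    exact hmem
  | succ n ih =>
    intro S I y w hn hconv hInd hIS hwI hyw hnl
    have hz : ∃ z ∈ S, G.Adj w z ∧ z ≠ y ∧ ∀ w', w' ≠ w → ¬ LockedOn G S I z w' := by
      by_contra hno
      push_neg at hno
      exact hnl (lockedOn_fold hwI (hIS hwI) hyw (fun z hzS hadj hne => hno z hzS hadj hne))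
    obtain ⟨z, hzS, hwz, hzy, hznl⟩ := hz
    have hzside : z ∈ SubtreeSide G y w := nbr_mem_side hT hyw hwz hzy
    have hznotI : z ∉ I := fun hzI => hInd hwI hzI hwz
    set A0 : Set V := I ∩ SubtreeSide G y w with hA0def
    set R : Set V := SubtreeSide G y w ∩ S with hRdef
    set W : Finset V := Set.toFinset {t | t ∈ I ∧ G.Adj z t ∧ t ≠ w} with hWdef
    have hWmem : ∀ t, t ∈ W ↔ (t ∈ I ∧ G.Adj z t ∧ t ≠ w) := by
      intro t; rw [hWdef, Set.mem_toFinset]; rfl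
    -- basic containments
    have hsubR : ∀ {w' : V}, G.Adj z w' → w' ≠ w → SubtreeSide G z w' ⊆ SubtreeSide G y w :=
      fun hzw' hne => side_nested hT hyw hwz hzy hzw' hne
    have hWA0 : ∀ t ∈ W, t ∈ A0 ∧ G.Adj z t ∧ ¬ LockedOn G S A0 z t := by
      intro t ht
      obtain ⟨htI, htadj, htw⟩ := (hWmem t).1 ht
      have htside : t ∈ SubtreeSide G y w := hsubR htadj htw (self_mem_side hT htadj)
      refine ⟨⟨htI, htside⟩, htadj, ?_⟩
      intro hL
      refine hznl t htw (lockedOn_congr hT hL ?_)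
      ext s
      simp only [hA0def, Set.mem_inter_iff]
      constructor
      · rintro ⟨⟨hsI, _⟩, hs2⟩
        exact ⟨hsI, hs2⟩
      · rintro ⟨hsI, hs2⟩
        exact ⟨⟨hsI, hsubR htadj htw hs2⟩, hs2⟩
    have hchain := chain_escape hT (S := S) (R := R) (A0 := A0) (p := z) W
      Set.inter_subset_right
      (fun t ht => ⟨ht.2, hIS ht.1⟩)
      (fun a ha b hb => hInd ha.1 hb.1)
      (fun hzA => hznotI hzA.1)
      hWA0
      (fun w' hw' => by
        intro t ht
        exact ⟨hsubR ((hWmem w').1 hw').2.1 ((hWmem w').1 hw').2.2 ht.1, ht.2⟩)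
      ?_
    rotate_left
    · -- hesc via ih
      intro J w' hw' hJind hJR hw'J hJeq
      obtain ⟨hw'I, hw'adj, hw'ne⟩ := (hWmem w').1 hw'
      have hwnot : w ∉ SubtreeSide G z w' := sibling_not_mem_side hT hwz.symm hw'adj hw'ne.symm
      have hss : SubtreeSide G z w' ∩ S ⊂ R := by
        constructor
        · intro t ht
          exact ⟨hsubR hw'adj hw'ne ht.1, ht.2⟩
        · intro hsup
          exact hwnot (hsup ⟨self_mem_side hT hyw, hIS hwI⟩).1
      have hlt : (SubtreeSide G z w' ∩ S).ncard ≤ n := by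
        have := Set.ncard_lt_ncard hss (Set.toFinite _)
        omega
      have hJS : J ⊆ S := hJR.trans Set.inter_subset_right
      refine ih S J z w' hlt hconv hJind hJS hw'J hw'adj ?_
      intro hL
      have heq2 : J ∩ SubtreeSide G z w' = I ∩ SubtreeSide G z w' := by
        ext s
        have hs : s ∈ SubtreeSide G z w' → (s ∈ J ↔ s ∈ A0) := by
          intro hss'
          constructor
          · intro hsJ
            have : s ∈ J ∩ SubtreeSide G z w' := ⟨hsJ, hss'⟩
            rw [hJeq] at this
            exact this.1
          · intro hsA
            have : s ∈ A0 ∩ SubtreeSide G z w' := ⟨hsA, hss'⟩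
            rw [← hJeq] at this
            exact this.1
        simp only [Set.mem_inter_iff]
        constructor
        · rintro ⟨hsJ, hss'⟩
          exact ⟨((hs hss').1 hsJ).1, hss'⟩
        · rintro ⟨hsI, hss'⟩
          exact ⟨(hs hss').2 ⟨hsI, hsubR hw'adj hw'ne hss'⟩, hss'⟩
      exact hznl w' hw'ne (lockedOn_congr hT hL heq2)
    -- use the chain result and do the final move w → z
    obtain ⟨J, hJr, hJW, hJU⟩ := hchain
    have hJR : J ⊆ R := reconfOn_subset (fun t ht => ⟨ht.2, hIS ht.1⟩) hJr
    have hJind : IndepSet G J := reconfOn_indep (fun a ha b hb => hInd ha.1 hb.1) hJr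
    have hUside : ∀ t, G.Adj z t → t ∉ ⋃ w' ∈ (W : Set V), SubtreeSide G z w' ∨ t ∈ (W : Set V) := by
      intro t hadj
      by_cases htU : t ∈ ⋃ w' ∈ (W : Set V), SubtreeSide G z w'
      · simp only [Set.mem_iUnion, exists_prop] at htU
        obtain ⟨w', hw', hmem⟩ := htU
        have := adj_mem_side_eq hT hadj hmem
        right
        rw [this]
        exact hw'
      · exact Or.inl htU
    have hwU : w ∉ ⋃ w' ∈ (W : Set V), SubtreeSide G z w' := by
      simp only [Set.mem_iUnion, exists_prop, not_exists, not_and]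
      intro w' hw'
      exact sibling_not_mem_side hT hwz.symm ((hWmem w').1 hw').2.1 ((hWmem w').1 hw').2.2.symm
    have hzU : z ∉ ⋃ w' ∈ (W : Set V), SubtreeSide G z w' := by
      simp only [Set.mem_iUnion, exists_prop, not_exists, not_and]
      intro w' hw'
      exact base_not_mem_side hT ((hWmem w').1 hw').2.1
    have hwJ : w ∈ J := (hJU w hwU).2 ⟨hwI, self_mem_side hT hyw⟩
    have hzJ : z ∉ J := fun hz => hznotI ((hJU z hzU).1 hz).1
    have hwz' : w ≠ z := fun h => hznotI (h ▸ hwI)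
    refine ⟨(J \ {w}) ∪ {z}, hJr.tail ?_, ?_⟩
    · refine ⟨?_, ?_, w, z, hwz, ?_, ?_⟩
      · intro t ht
        rcases ht with ht | ht
        · exact hJR ht.1
        · rw [ht]; exact ⟨hzside, hzS⟩
      · intro a ha b hb hadj
        rcases ha with ha | ha
        · rcases hb with hb | hb
          · exact hJind ha.1 hb.1 hadj
          · -- b = z, a ∈ J \ {w} adjacent z
            rw [hb] at hadj
            rcases hUside a hadj.symm with hn | hmem
            · have haI : a ∈ I := ((hJU a hn).1 ha.1).1
              have : a ∈ W := (hWmem a).2 ⟨haI, hadj.symm, fun h => ha.2 (h ▸ rfl)⟩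
              exact hJW a this ha.1
            · exact hJW a hmem ha.1
        · rcases hb with hb | hb
          · rw [ha] at hadj
            rcases hUside b hadj with hn | hmem
            · have hbI : b ∈ I := ((hJU b hn).1 hb.1).1
              have : b ∈ W := (hWmem b).2 ⟨hbI, hadj, fun h => hb.2 (h ▸ rfl)⟩
              exact hJW b this hb.1
            · exact hJW b hmem hb.1
          · rw [ha, hb] at hadj
            exact G.loopless.irrefl z hadj
      · ext t
        simp only [Set.mem_diff, Set.mem_union, Set.mem_singleton_iff]
        constructor
        · rintro ⟨htJ, hnot⟩
          by_contra htne
          exact hnot (Or.inl ⟨htJ, htne⟩)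
        · rintro rfl
          exact ⟨hwJ, fun h => by
            rcases h with h | h
            · exact h.2 rfl
            · exact hwz' h⟩
      · ext t
        simp only [Set.mem_diff, Set.mem_union, Set.mem_singleton_iff]
        constructor
        · rintro ⟨h1 | h2, htJ⟩
          · exact (htJ h1.1).elim
          · exact h2
        · rintro rfl
          exact ⟨Or.inr rfl, hzJ⟩
    · intro hmem
      rcases hmem with hmem | hmem
      · exact hmem.2 rfl
      · exact hwz' hmem

end Escape

section Moves

variable (hT : G.IsTree)
include hT

lemma chain_move [Fintype V] {mover : V} (hconv : Conv G S) (hInd : IndepSet G I) (hIS : I ⊆ S)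
    (hpS : p ∈ S) (hpI : p ∉ I) (hmI : mover ∈ I) (hadjm : G.Adj p mover)
    (hbl : ∀ w ∈ I, G.Adj p w → w ≠ mover → ¬ LockedOn G S I p w) :
    ∃ J, ReconfOn G S I J ∧ p ∈ J ∧ mover ∉ J := by
  classical
  set W : Finset V := Set.toFinset {t | t ∈ I ∧ G.Adj p t ∧ t ≠ mover} with hWdef
  have hWmem : ∀ t, t ∈ W ↔ (t ∈ I ∧ G.Adj p t ∧ t ≠ mover) := fun t => by
    rw [hWdef, Set.mem_toFinset]; rfl
  have hchain := chain_escape hT (S := S) (R := S) (A0 := I) (p := p) W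
    subset_rfl hIS hInd hpI
    (fun w hw => ⟨((hWmem w).1 hw).1, ((hWmem w).1 hw).2.1,
      hbl w ((hWmem w).1 hw).1 ((hWmem w).1 hw).2.1 ((hWmem w).1 hw).2.2⟩)
    (fun w _ => Set.inter_subset_right)
    ?_
  rotate_left
  · intro J w hw hJind hJS hwJ hJeq
    obtain ⟨hwI, hwadj, hwne⟩ := (hWmem w).1 hw
    refine escape_lemma hT _ S J p w le_rfl hconv hJind hJS hwJ hwadj ?_
    intro hL
    exact hbl w hwI hwadj hwne (lockedOn_congr hT hL hJeq)
  obtain ⟨J, hJr, hJW, hJU⟩ := hchain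
  have hJS : J ⊆ S := reconfOn_subset hIS hJr
  have hJind := reconfOn_indep hInd hJr
  have hpU : p ∉ ⋃ w ∈ (W : Set V), SubtreeSide G p w := by
    simp only [Set.mem_iUnion, exists_prop, not_exists, not_and]
    intro w hw
    exact base_not_mem_side hT ((hWmem w).1 hw).2.1
  have hpJ : p ∉ J := fun h => hpI ((hJU p hpU).1 h)
  have hmU : mover ∉ ⋃ w ∈ (W : Set V), SubtreeSide G p w := by
    simp only [Set.mem_iUnion, exists_prop, not_exists, not_and]
    intro w hw hmem
    exact ((hWmem w).1 hw).2.2 (adj_mem_side_eq hT hadjm hmem).symm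
  have hmJ : mover ∈ J := (hJU mover hmU).2 hmI
  have hmp : mover ≠ p := fun h => hpI (h ▸ hmI)
  refine ⟨(J \ {mover}) ∪ {p}, hJr.tail ?_, Or.inr rfl, ?_⟩
  · refine ⟨?_, ?_, mover, p, hadjm.symm, ?_, ?_⟩
    · intro t ht
      rcases ht with ht | ht
      · exact hJS ht.1
      · rw [ht]; exact hpS
    · intro s hs t ht hadj
      rcases hs with hs | hs
      · rcases ht with ht | ht
        · exact hJind hs.1 ht.1 hadj
        · rw [ht] at hadj
          rcases (em (s ∈ ⋃ w ∈ (W : Set V), SubtreeSide G p w)) with hU | hU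
          · simp only [Set.mem_iUnion, exists_prop] at hU
            obtain ⟨w, hw, hmem⟩ := hU
            have : s = w := adj_mem_side_eq hT hadj.symm hmem
            exact hJW w hw (this ▸ hs.1)
          · have hsI : s ∈ I := (hJU s hU).1 hs.1
            have hsW : s ∈ W := (hWmem s).2 ⟨hsI, hadj.symm, fun h => hs.2 (h ▸ rfl)⟩
            exact hJW s hsW hs.1
      · rcases ht with ht | ht
        · rw [hs] at hadj
          rcases (em (t ∈ ⋃ w ∈ (W : Set V), SubtreeSide G p w)) with hU | hU
          · simp only [Set.mem_iUnion, exists_prop] at hU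
            obtain ⟨w, hw, hmem⟩ := hU
            have : t = w := adj_mem_side_eq hT hadj hmem
            exact hJW w hw (this ▸ ht.1)
          · have htI : t ∈ I := (hJU t hU).1 ht.1
            have htW : t ∈ W := (hWmem t).2 ⟨htI, hadj, fun h => ht.2 (h ▸ rfl)⟩
            exact hJW t htW ht.1
        · rw [hs, ht] at hadj
          exact G.loopless.irrefl p hadj
    · ext t
      simp only [Set.mem_diff, Set.mem_union, Set.mem_singleton_iff]
      constructor
      · rintro ⟨htJ, hnot⟩
        by_contra htne
        exact hnot (Or.inl ⟨htJ, htne⟩)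
      · rintro rfl
        exact ⟨hmJ, fun h => by
          rcases h with h | h
          · exact h.2 rfl
          · exact hmp h⟩
    · ext t
      simp only [Set.mem_diff, Set.mem_union, Set.mem_singleton_iff]
      constructor
      · rintro ⟨h1 | h2, htJ⟩
        · exact (htJ h1.1).elim
        · exact h2
      · rintro rfl
        exact ⟨Or.inr rfl, hpJ⟩
  · intro hmem
    rcases hmem with hmem | hmem
    · exact hmem.2 rfl
    · exact hmp hmem

lemma single_move (hconv : Conv G S) :
    ∀ (n : ℕ) (b r : V), b ∈ S → r ∈ S → G.dist b r ≤ n → ReconfOn G S {b} {r} := by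
  intro n
  induction n with
  | zero =>
    intro b r hb hr hd
    have : b = r := (dist_zero_iff hT).1 (by omega)
    rw [this]
    exact .refl
  | succ n ih =>
    intro b r hb hr hd
    by_cases hbr : b = r
    · rw [hbr]
      exact .refl
    · obtain ⟨c, hadj, hd1, hd2⟩ := exists_first_step hT hbr
      have hcS : c ∈ S := hconv hb hr hd2
      have hbc : b ≠ c := hadj.ne
      refine ReflTransGen.head ?_ (ih c r hcS hr (by omega))
      refine ⟨?_, ?_, b, c, hadj, ?_, ?_⟩
      · intro t ht; rw [ht]; exact hcS
      · intro s hs t ht hadj'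
        rw [hs, ht] at hadj'
        exact G.loopless.irrefl c hadj'
      · ext t
        simp only [Set.mem_diff, Set.mem_singleton_iff]
        constructor
        · rintro ⟨rfl, _⟩; rfl
        · rintro rfl; exact ⟨rfl, fun h => hbc h⟩
      · ext t
        simp only [Set.mem_diff, Set.mem_singleton_iff]
        constructor
        · rintro ⟨rfl, _⟩; rfl
        · rintro rfl; exact ⟨rfl, fun h => hbc h.symm⟩

lemma attract [Fintype V] (hconv : Conv G S) (hvS : v ∈ S) :
    ∀ (n : ℕ) (I : Set V), IndepSet G I → I ⊆ S → (∀ x ∈ I, ¬ RigidA G S I x) →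
    (∃ x ∈ I, G.dist x v ≤ n) →
    ∃ I', ReconfOn G S I I' ∧ v ∈ I' := by
  intro n
  induction n with
  | zero =>
    rintro I hInd hIS hmov ⟨x, hxI, hxd⟩
    have : x = v := (dist_zero_iff hT).1 (by omega)
    exact ⟨I, .refl, this ▸ hxI⟩
  | succ n ih =>
    rintro I hInd hIS hmov ⟨x0, hx0I, hx0d⟩
    obtain ⟨x, hxI, hxmin⟩ := Set.exists_min_image I (fun t => G.dist t v) I.toFinite ⟨x0, hx0I⟩
    by_cases hxd : G.dist x v ≤ n
    · exact ih I hInd hIS hmov ⟨x, hxI, hxd⟩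
    have hxv : x ≠ v := by
      intro h
      rw [h, SimpleGraph.dist_self] at hxd
      omega
    obtain ⟨p, hadj, hd1, hd2⟩ := exists_first_step hT hxv
    have hxle : G.dist x v ≤ n + 1 := le_trans (hxmin x0 hx0I) hx0d
    have hpS : p ∈ S := hconv (hIS hxI) hvS hd2
    have hpI : p ∉ I := by
      intro hpI
      have := hxmin p hpI
      omega
    have hnext : ∀ (J : Set V), ReconfOn G S I J → p ∈ J → ∃ I', ReconfOn G S I I' ∧ v ∈ I' := by
      intro J hJr hpJ
      have hJind := reconfOn_indep hInd hJr
      have hJS := reconfOn_subset hIS hJr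
      have hJmov : ∀ t ∈ J, ¬ RigidA G S J t := by
        intro t _ hR
        have hRI := (rigidA_congr hInd hIS hJr).2 hR
        exact hmov t (hRI I .refl) hRI
      obtain ⟨I', h1, h2⟩ := ih J hJind hJS hJmov ⟨p, hpJ, by omega⟩
      exact ⟨I', hJr.trans h1, h2⟩
    by_cases hex1 : ∃ w ∈ I, G.Adj p w ∧ LockedOn G S I p w
    · obtain ⟨wst, hwstI, hwstadj, hwstL⟩ := hex1
      have huniq : ∀ w ∈ I, G.Adj p w → w ≠ wst → ¬ LockedOn G S I p w := by
        intro w hwI hwadj hne hL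
        exact hmov w hwI (two_roots hL hwstL hne).1
      obtain ⟨J, hJr, hpJ, _⟩ := chain_move hT hconv hInd hIS hpS hpI hwstI hwstadj huniq
      exact hnext J hJr hpJ
    · push_neg at hex1
      obtain ⟨J, hJr, hpJ, _⟩ := chain_move hT hconv hInd hIS hpS hpI hxI hadj.symm
        (fun w hw hadjw _ => hex1 w hw hadjw)
      exact hnext J hJr hpJ

end Moves

section Main

variable (hT : G.IsTree)
include hT

lemma branch_classify {u p2 : V} (hconv : Conv G S) (huS : u ∈ S) (hup2 : G.Adj u p2)
    (hleaf : ∀ s ∈ S, G.Adj u s → s ≠ p2 → ∀ t ∈ S, G.Adj s t → t = u) :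
    ∀ (n : ℕ) (t : V), t ∈ S → G.dist t u ≤ n → t ∉ SubtreeSide G u p2 →
      t = u ∨ (G.Adj u t ∧ t ≠ p2) := by
  intro n
  induction n with
  | zero =>
    intro t htS hd _
    exact Or.inl ((dist_zero_iff hT).1 (by omega))
  | succ n ih =>
    intro t htS hd hside
    by_cases htu : t = u
    · exact Or.inl htu
    obtain ⟨c, hadj, hd1, hd2⟩ := exists_first_step hT htu
    have hcS : c ∈ S := hconv htS huS hd2
    by_cases hcside : c ∈ SubtreeSide G u p2
    · have hexit := side_exit hT hup2 hcside hside hadj.symm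
      exact absurd hexit.2 htu
    · rcases ih c hcS (by omega) hcside with rfl | ⟨hadjuc, hcp2⟩
      · refine Or.inr ⟨hadj.symm, ?_⟩
        intro h
        rw [h] at hside
        exact hside (self_mem_side hT hup2)
      · exact absurd (hleaf c hcS hadjuc hcp2 t htS hadj.symm) htu

lemma residual_facts [Fintype V] {u p2 : V} (hconv : Conv G S)
    (hvS : v ∈ S) (huS : u ∈ S) (hvu : G.Adj v u) (hup2 : G.Adj u p2) (hvp2 : v ≠ p2)
    (hleaf : ∀ s ∈ S, G.Adj u s → s ≠ p2 → ∀ t ∈ S, G.Adj s t → t = u)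
    {It : Set V} (hInd : IndepSet G It) (hIS : It ⊆ S) (hvI : v ∈ It)
    (hmov : ∀ x ∈ It, ¬ RigidA G S It x) :
    (It \ {v} ⊆ SubtreeSide G u p2 ∩ S) ∧
    (∀ x ∈ It \ {v}, ¬ RigidA G (SubtreeSide G u p2 ∩ S) (It \ {v}) x) := by
  classical
  have hLuv : LockedOn G S It u v :=
    lockedOn_fold hvI hvS hvu.symm
      (fun z hz hadj hne => absurd (hleaf v hvS hvu.symm hvp2 z hz hadj) hne)
  have hsib : ∀ s, s ∈ S → G.Adj u s → s ≠ v → s ≠ p2 → s ∉ It := by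
    intro s hsS hadj hsv hsp2 hsI
    have hLus : LockedOn G S It u s :=
      lockedOn_fold hsI hsS hadj
        (fun z hz hadjz hne => absurd (hleaf s hsS hadj hsp2 z hz hadjz) hne)
    exact hmov v hvI (two_roots hLuv hLus (fun h => hsv h.symm)).1
  have huI : u ∉ It := fun hu => hInd hvI hu hvu
  have hpart1 : It \ {v} ⊆ SubtreeSide G u p2 ∩ S := by
    rintro t ⟨htI, htv⟩
    have htS : t ∈ S := hIS htI
    refine ⟨?_, htS⟩
    by_contra hside
    rcases branch_classify hT hconv huS hup2 hleaf (G.dist t u) t htS le_rfl hside with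
      rfl | ⟨hadjut, htp2⟩
    · exact huI htI
    · exact hsib t htS hadjut (fun h => htv (h ▸ rfl)) htp2 htI
  refine ⟨hpart1, ?_⟩
  intro xh hxh hR
  set S' : Set V := SubtreeSide G u p2 ∩ S with hS'def
  have hconv' : Conv G S' := conv_inter (side_conv hT hup2) hconv
  have hresInd : IndepSet G (It \ {v}) := fun a ha b hb => hInd ha.1 hb.1
  -- Step 1 : certificate in S'
  have hcert : Cert G S' (It \ {v}) xh := by
    refine ⟨hxh, ?_⟩
    intro y hyS' hadj
    by_contra hno
    push_neg at hno
    have hyI : y ∉ It \ {v} := fun hy => hresInd hxh hy hadj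
    obtain ⟨J, hJr, _, hxJ⟩ := chain_move hT hconv' hresInd hpart1 hyS' hyI hxh hadj.symm
      (fun w hw hadjw hne => hno w (fun h => hne (h ▸ rfl)) )
    exact hxJ (hR J hJr)
  -- Step 2 : certificate in S
  have hcert2 : Cert G S It xh := by
    refine ⟨hxh.1, ?_⟩
    intro y hyS hadj
    have hxside : xh ∈ SubtreeSide G u p2 := (hpart1 hxh).1
    by_cases hyside : y ∈ SubtreeSide G u p2
    · obtain ⟨w, hwne, hwL⟩ := hcert.2 y ⟨hyside, hyS⟩ hadj
      refine ⟨w, hwne, ?_⟩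
      obtain ⟨P, hP, hroot⟩ := hwL
      refine ⟨insert (u, v) P, ?_, Set.mem_insert_iff.2 (Or.inr hroot)⟩
      rintro q hq
      rcases Set.mem_insert_iff.1 hq with rfl | hqP
      · refine ⟨hvI, hvS, hvu.symm, ?_⟩
        intro z hz hadjz hne
        exact absurd (hleaf v hvS hvu.symm hvp2 z hz hadjz) hne
      · obtain ⟨h1, h2, h3, h4⟩ := hP _ hqP
        refine ⟨h1.1, h2.2, h3, ?_⟩
        intro z hz hadjz hne
        by_cases hzside : z ∈ SubtreeSide G u p2
        · obtain ⟨w', hw1, hw2⟩ := h4 z ⟨hzside, hz⟩ hadjz hne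
          exact ⟨w', hw1, Set.mem_insert_iff.2 (Or.inr hw2)⟩
        · have hexit := side_exit hT hup2 h2.1 hzside hadjz
          refine ⟨v, ?_, ?_⟩
          · rw [hexit.1]
            exact hvp2
          · rw [hexit.2]
            exact Set.mem_insert _ _
    · have hexit := side_exit hT hup2 hxside hyside hadj
      refine ⟨v, ?_, ?_⟩
      · rw [hexit.1]
        exact hvp2
      · rw [hexit.2]
        exact hLuv
  exact hmov xh hxh.1 (cert_rigid hcert2)

lemma main_gen [Fintype V] : ∀ (k : ℕ) (S Ib Ir : Set V), Conv G S →
    IndepSet G Ib → IndepSet G Ir → Ib ⊆ S → Ir ⊆ S → Ib.ncard = k → Ir.ncard = k →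
    (∀ x ∈ Ib, ¬ RigidA G S Ib x) → (∀ x ∈ Ir, ¬ RigidA G S Ir x) →
    ReconfOn G S Ib Ir := by
  classical
  intro k
  induction k using Nat.strong_induction_on with
  | _ k ih =>
  intro S Ib Ir hconv hIb hIr hIbS hIrS hkb hkr hmovb hmovr
  by_cases hk0 : k = 0
  · subst hk0
    have hb : Ib = ∅ := (Set.ncard_eq_zero Ib.toFinite).1 hkb
    have hr : Ir = ∅ := (Set.ncard_eq_zero Ir.toFinite).1 hkr
    rw [hb, hr]
    exact .refl
  by_cases hk1 : k = 1
  · subst hk1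
    obtain ⟨b, hb⟩ := Set.ncard_eq_one.1 hkb
    obtain ⟨r, hr⟩ := Set.ncard_eq_one.1 hkr
    rw [hb, hr]
    exact single_move hT hconv (G.dist b r) b r (hIbS (hb ▸ rfl)) (hIrS (hr ▸ rfl)) le_rfl
  have hk2 : 2 ≤ k := by omega
  -- two distinct tokens
  obtain ⟨x1, x2, hx1, hx2, hx12⟩ := (Set.one_lt_ncard_iff Ib.toFinite).1 (by omega)
  have hd12 : 2 ≤ G.dist x1 x2 := by
    have h0 : G.dist x1 x2 ≠ 0 := fun h => hx12 ((dist_zero_iff hT).1 h)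
    have h1 : G.dist x1 x2 ≠ 1 := fun h => hIb hx1 hx2 (dist_eq_one_iff_adj.1 h)
    omega
  -- a diametral pair of S
  obtain ⟨q, hqmem, hqmax⟩ := Set.exists_max_image (S ×ˢ S) (fun q => G.dist q.1 q.2)
    (Set.toFinite _) ⟨(x1, x2), hIbS hx1, hIbS hx2⟩
  obtain ⟨a, v⟩ := q
  simp only [Set.mem_prod] at hqmem
  obtain ⟨haS, hvS⟩ := hqmem
  have hdav : 2 ≤ G.dist a v := le_trans hd12 (hqmax (x1, x2) ⟨hIbS hx1, hIbS hx2⟩)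
  -- v is a leaf of S
  have hvleaf : ∀ z ∈ S, G.Adj v z → ∀ z' ∈ S, G.Adj v z' → z = z' := by
    intro z hz hadjz z' hz' hadjz'
    by_contra hne
    have hm : ∀ t, t ∈ S → G.Adj v t → a ∈ SubtreeSide G v t := by
      intro t ht hadjt
      have hne1 := adj_dist_ne hT hadjt a
      have hle1 := adj_dist_le hT hadjt.symm a
      have hub : G.dist a t ≤ G.dist a v := hqmax (a, t) ⟨haS, ht⟩
      rw [mem_side_iff hT hadjt]
      omega
    exact side_disjoint hT hadjz hadjz' hne a (hm z hz hadjz) (hm z' hz' hadjz')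
  have hva : v ≠ a := by
    intro h
    rw [h, SimpleGraph.dist_self] at hdav
    omega
  obtain ⟨u, hvu, hdu1, hdu2⟩ := exists_first_step hT hva
  have huS : u ∈ S := hconv hvS haS hdu2
  have hdva : G.dist v a = G.dist a v := dcomm v a
  have hua : u ≠ a := by
    intro h
    rw [h, SimpleGraph.dist_self] at hdu1
    omega
  obtain ⟨p2, hup2, hdp1, hdp2⟩ := exists_first_step hT hua
  have hp2S : p2 ∈ S := hconv huS haS hdp2
  have hdau : G.dist a u + 1 = G.dist a v := by
    rw [dcomm a u, dcomm a v]
    exact hdu1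
  have hdap2 : G.dist a p2 + 1 = G.dist a u := by
    rw [dcomm a p2, dcomm a u]
    exact hdp1
  have hvp2 : v ≠ p2 := by
    intro h
    rw [← h] at hdap2
    omega
  have hvleafU : ∀ z ∈ S, G.Adj v z → z = u := fun z hz hadj => hvleaf z hz hadj u huS hvu
  -- every non-p2 S-neighbor of u is an S-leaf
  have hleaf : ∀ s ∈ S, G.Adj u s → s ≠ p2 → ∀ t ∈ S, G.Adj s t → t = u := by
    intro s hsS hadj hsp2 t htS hadjst
    by_cases hsv : s = v
    · subst hsv
      exact (hvleafU t htS hadjst).symm ▸ (hvleafU t htS hadjst)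
    · have h1 := adj_dist_le hT hadj a
      have h2 := adj_dist_le hT hadj.symm a
      have h3 := adj_dist_ne hT hadj a
      have hub : G.dist a s ≤ G.dist a v := hqmax (a, s) ⟨haS, hsS⟩
      by_cases hcase : G.dist a s + 1 = G.dist a u
      · exfalso
        have hm1 : a ∈ SubtreeSide G u s := by
          rw [mem_side_iff hT hadj]
          omega
        have hm2 : a ∈ SubtreeSide G u p2 := by
          rw [mem_side_iff hT hup2]
          omega
        exact side_disjoint hT hadj hup2 hsp2 a hm1 hm2
      · have hsval : G.dist a s = G.dist a u + 1 := by omega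
        by_contra htu
        have g1 := adj_dist_le hT hadjst a
        have g2 := adj_dist_le hT hadjst.symm a
        have g3 := adj_dist_ne hT hadjst a
        have gub : G.dist a t ≤ G.dist a v := hqmax (a, t) ⟨haS, htS⟩
        have hgval : G.dist a t + 1 = G.dist a s := by omega
        have hm1 : a ∈ SubtreeSide G s t := by
          rw [mem_side_iff hT hadjst]
          omega
        have hm2 : a ∈ SubtreeSide G s u := by
          rw [mem_side_iff hT hadj.symm]
          omega
        exact side_disjoint hT hadjst hadj.symm htu a hm1 hm2
  -- attract a token to v on both sides
  obtain ⟨Jb, hrb, hvJb⟩ := attract hT hconv hvS (G.dist x1 v) Ib hIb hIbS hmovb ⟨x1, hx1, le_rfl⟩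
  have hIrne : Ir.Nonempty := by
    rw [← Set.ncard_pos Ir.toFinite] at *
    omega
  obtain ⟨y1, hy1⟩ := hIrne
  obtain ⟨Jr, hrr, hvJr⟩ := attract hT hconv hvS (G.dist y1 v) Ir hIr hIrS hmovr ⟨y1, hy1, le_rfl⟩
  have hJbInd := reconfOn_indep hIb hrb
  have hJbS := reconfOn_subset hIbS hrb
  have hJrInd := reconfOn_indep hIr hrr
  have hJrS := reconfOn_subset hIrS hrr
  have hJbmov : ∀ t ∈ Jb, ¬ RigidA G S Jb t := by
    intro t _ hRt
    have hRI := (rigidA_congr hIb hIbS hrb).2 hRt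
    exact hmovb t (hRI Ib .refl) hRI
  have hJrmov : ∀ t ∈ Jr, ¬ RigidA G S Jr t := by
    intro t _ hRt
    have hRI := (rigidA_congr hIr hIrS hrr).2 hRt
    exact hmovr t (hRI Ir .refl) hRI
  obtain ⟨hsubb, hmovb'⟩ := residual_facts hT hconv hvS huS hvu hup2 hvp2 hleaf hJbInd hJbS hvJb hJbmov
  obtain ⟨hsubr, hmovr'⟩ := residual_facts hT hconv hvS huS hvu hup2 hvp2 hleaf hJrInd hJrS hvJr hJrmov
  have hcardb : Jb.ncard = k := (reconfOn_ncard hrb).symm.trans hkb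
  have hcardr : Jr.ncard = k := (reconfOn_ncard hrr).symm.trans hkr
  have hcardb' : (Jb \ {v}).ncard = k - 1 := by
    rw [Set.ncard_diff_singleton_of_mem hvJb, hcardb]
  have hcardr' : (Jr \ {v}).ncard = k - 1 := by
    rw [Set.ncard_diff_singleton_of_mem hvJr, hcardr]
  have hrec := ih (k - 1) (by omega) (SubtreeSide G u p2 ∩ S) (Jb \ {v}) (Jr \ {v})
    (conv_inter (side_conv hT hup2) hconv)
    (fun s hs t ht => hJbInd hs.1 ht.1) (fun s hs t ht => hJrInd hs.1 ht.1)
    hsubb hsubr hcardb' hcardr' hmovb' hmovr'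
  have hvnotside : v ∉ SubtreeSide G u p2 ∩ S :=
    fun h => sibling_not_mem_side hT hvu.symm hup2 hvp2 h.1
  have hlift := reconfOn_lift (S := S) Set.inter_subset_right
    (Set.singleton_subset_iff.2 hvS)
    (by
      intro f hf
      rw [Set.mem_singleton_iff] at hf
      subst hf
      exact hvnotside)
    (by
      intro s hs t ht hadj
      rw [Set.mem_singleton_iff] at hs ht
      rw [hs, ht] at hadj
      exact G.loopless.irrefl v hadj)
    (by
      intro f hf d hd hadj
      rw [Set.mem_singleton_iff] at hf
      subst hf
      have := hvleafU d hd.2 hadj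
      subst this
      exact base_not_mem_side hT hup2 hd.1)
    hsubb hrec
  have heqb : {v} ∪ (Jb \ {v}) = Jb := by
    rw [Set.singleton_union, Set.insert_diff_singleton, Set.insert_eq_self.2 hvJb]
  have heqr : {v} ∪ (Jr \ {v}) = Jr := by
    rw [Set.singleton_union, Set.insert_diff_singleton, Set.insert_eq_self.2 hvJr]
  rw [heqb, heqr] at hlift
  exact (hrb.trans hlift).trans (reconfOn_symm hIr hIrS hrr)

end Main

end TS

theorem reconf_iff_card_eq_of_all_movable {V : Type*} [Fintype V] (G : SimpleGraph V)
    (hT : G.IsTree) (Ib Ir : Set V) (hIb : IndepSet G Ib) (hIr : IndepSet G Ir)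
    (hmovb : ∀ u ∈ Ib, ¬ Rigid G Ib u) (hmovr : ∀ u ∈ Ir, ¬ Rigid G Ir u) :
    Reconf G Ib Ir ↔ Ib.ncard = Ir.ncard := by
  classical
  constructor
  · intro h
    exact TS.reconf_ncard h
  · intro hcard
    have hmovb' : ∀ x ∈ Ib, ¬ TS.RigidA G Set.univ Ib x := by
      intro x hx hR
      exact hmovb x hx (fun J hJ => hR J (TS.reconfOn_univ_iff.2 hJ))
    have hmovr' : ∀ x ∈ Ir, ¬ TS.RigidA G Set.univ Ir x := by
      intro x hx hR
      exact hmovr x hx (fun J hJ => hR J (TS.reconfOn_univ_iff.2 hJ))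
    exact TS.reconfOn_univ_iff.1 (TS.main_gen hT Ib.ncard Set.univ Ib Ir TS.conv_univ hIb hIr
      (Set.subset_univ _) (Set.subset_univ _) rfl hcard.symm hmovb' hmovr')
end

section
/- For every positive integer k, consider the path P with vertices v_1,…,v_{8k}, I_b = {v_1, v_3, …, v_{2k-1}} and I_r = {v_{6k+2}, v_{6k+4}, …, v_{8k}}. Then I_b ⇝ I_r under token sliding, and every reconfiguration sequence from I_b to I_r has length Ω(k²). -/
namespace PQLB
open SimpleGraph

/-- Intermediate configuration: tokens `0, …, j-1` on their start positions `2m`,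
the sliding token at position `p`, tokens `j+1, …, k-1` on their final positions. -/
def C (k j p : ℕ) : Set (Fin (8 * k)) :=
  {i | (∃ m < j, (i : ℕ) = 2 * m) ∨ (i : ℕ) = p ∨
       (∃ m, j < m ∧ m < k ∧ (i : ℕ) = 6 * k + 1 + 2 * m)}

lemma C_indep {k j p : ℕ} (hj : j < k) (h1 : 2 * j ≤ p) (h2 : p ≤ 6 * k + 1 + 2 * j) :
    IndepSet (pathGraph (8 * k)) (C k j p) := by
  intro u hu v hv hadj
  rw [pathGraph_adj] at hadj
  simp only [C, Set.mem_setOf_eq] at hu hv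
  rcases hu with ⟨m, hm, he⟩ | he | ⟨m, hm1, hm2, he⟩ <;>
    rcases hv with ⟨m', hm', he'⟩ | he' | ⟨m', hm1', hm2', he'⟩ <;> omega

lemma C_diff {k j p q : ℕ} (hj : j < k) (hp1 : 2 * j ≤ p) (hp2 : p ≤ 6 * k + 1 + 2 * j)
    (hq : p ≠ q) (hpk : p < 8 * k) :
    C k j p \ C k j q = {(⟨p, hpk⟩ : Fin (8 * k))} := by
  ext x
  simp only [C, Set.mem_diff, Set.mem_setOf_eq, Set.mem_singleton_iff, Fin.ext_iff]
  constructor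
  · rintro ⟨h, hn⟩
    push_neg at hn
    obtain ⟨hn1, hn2, hn3⟩ := hn
    rcases h with ⟨m, hm, he⟩ | he | ⟨m, hm1, hm2, he⟩
    · exact absurd he (hn1 m hm)
    · exact he
    · exact absurd he (hn3 m hm1 hm2)
  · rintro he
    refine ⟨Or.inr (Or.inl he), ?_⟩
    push_neg
    refine ⟨fun m hm => by omega, by omega, fun m hm1 hm2 => by omega⟩

lemma C_step {k j p : ℕ} (hj : j < k) (h1 : 2 * j ≤ p) (h2 : p + 1 ≤ 6 * k + 1 + 2 * j) :
    Step (pathGraph (8 * k)) (C k j p) (C k j (p + 1)) := by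
  have hpk : p < 8 * k := by omega
  have hpk1 : p + 1 < 8 * k := by omega
  refine ⟨C_indep hj (by omega) (by omega), ⟨p, hpk⟩, ⟨p + 1, hpk1⟩, ?_, ?_, ?_⟩
  · rw [pathGraph_adj]; left; simp
  · exact C_diff hj h1 (by omega) (by omega) hpk
  · exact C_diff (q := p) hj (p := p + 1) (by omega) (by omega) (by omega) hpk1

lemma C_run {k j : ℕ} (hj : j < k) :
    ∀ d, d ≤ 6 * k + 1 → Reconf (pathGraph (8 * k)) (C k j (2 * j)) (C k j (2 * j + d))
  | 0, _ => by exact Relation.ReflTransGen.refl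
  | d + 1, hd => by
      have ih := C_run hj d (by omega)
      have hs : Step (pathGraph (8 * k)) (C k j (2 * j + d)) (C k j (2 * j + d + 1)) :=
        C_step hj (by omega) (by omega)
      exact ih.tail hs

lemma C_shift {k j : ℕ} (hj1 : 1 ≤ j) (hj : j < k) :
    C k j (6 * k + 1 + 2 * j) = C k (j - 1) (2 * (j - 1)) := by
  ext x
  simp only [C, Set.mem_setOf_eq]
  constructor
  · rintro (⟨m, hm, he⟩ | he | ⟨m, hm1, hm2, he⟩)
    · rcases Nat.lt_or_ge m (j - 1) with h | h
      · exact Or.inl ⟨m, h, he⟩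
      · exact Or.inr (Or.inl (by omega))
    · exact Or.inr (Or.inr ⟨j, by omega, hj, he⟩)
    · exact Or.inr (Or.inr ⟨m, by omega, hm2, he⟩)
  · rintro (⟨m, hm, he⟩ | he | ⟨m, hm1, hm2, he⟩)
    · exact Or.inl ⟨m, by omega, he⟩
    · exact Or.inl ⟨j - 1, by omega, he⟩
    · rcases Nat.eq_or_lt_of_le hm1 with h | h
      · exact Or.inr (Or.inl (by omega))
      · exact Or.inr (Or.inr ⟨m, by omega, hm2, he⟩)

lemma C_start {k : ℕ} (hk : 0 < k) :
    {i : Fin (8 * k) | ∃ j < k, (i : ℕ) = 2 * j} = C k (k - 1) (2 * (k - 1)) := by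
  ext x
  simp only [C, Set.mem_setOf_eq]
  constructor
  · rintro ⟨j, hj, he⟩
    rcases Nat.lt_or_ge j (k - 1) with h | h
    · exact Or.inl ⟨j, h, he⟩
    · exact Or.inr (Or.inl (by omega))
  · rintro (⟨m, hm, he⟩ | he | ⟨m, hm1, hm2, he⟩)
    · exact ⟨m, by omega, he⟩
    · exact ⟨k - 1, by omega, he⟩
    · omega

lemma C_end {k : ℕ} (hk : 0 < k) :
    {i : Fin (8 * k) | ∃ j < k, (i : ℕ) = 6 * k + 1 + 2 * j} = C k 0 (6 * k + 1 + 2 * 0) := by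
  ext x
  simp only [C, Set.mem_setOf_eq]
  constructor
  · rintro ⟨j, hj, he⟩
    rcases Nat.eq_zero_or_pos j with h | h
    · exact Or.inr (Or.inl (by omega))
    · exact Or.inr (Or.inr ⟨j, by omega, hj, he⟩)
  · rintro (⟨m, hm, he⟩ | he | ⟨m, hm1, hm2, he⟩)
    · omega
    · exact ⟨0, hk, by omega⟩
    · exact ⟨m, hm2, he⟩

lemma reconf_all {k : ℕ} (hk : 0 < k) :
    ∀ e, e < k → Reconf (pathGraph (8 * k))
      {i : Fin (8 * k) | ∃ j < k, (i : ℕ) = 2 * j}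
      (C k (k - 1 - e) (6 * k + 1 + 2 * (k - 1 - e)))
  | 0, _ => by
      rw [C_start hk]
      have h := C_run (k := k) (j := k - 1) (by omega) (6 * k + 1) le_rfl
      have he : 2 * (k - 1) + (6 * k + 1) = 6 * k + 1 + 2 * (k - 1) := by omega
      rw [he] at h
      simpa using h
  | e + 1, he => by
      have ih := reconf_all hk e (by omega)
      have hsh := C_shift (k := k) (j := k - 1 - e) (by omega) (by omega)
      rw [hsh] at ih
      have h2 : k - 1 - e - 1 = k - 1 - (e + 1) := by omega
      rw [h2] at ih
      have h := C_run (k := k) (j := k - 1 - (e + 1)) (by omega) (6 * k + 1) le_rfl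
      have he2 : 2 * (k - 1 - (e + 1)) + (6 * k + 1) = 6 * k + 1 + 2 * (k - 1 - (e + 1)) := by
        omega
      rw [he2] at h
      exact ih.trans h

lemma reconf_final {k : ℕ} (hk : 0 < k) :
    Reconf (pathGraph (8 * k))
      {i : Fin (8 * k) | ∃ j < k, (i : ℕ) = 2 * j}
      {i : Fin (8 * k) | ∃ j < k, (i : ℕ) = 6 * k + 1 + 2 * j} := by
  have h := reconf_all hk (k - 1) (by omega)
  rw [C_end hk]
  have h0 : k - 1 - (k - 1) = 0 := by omega
  rw [h0] at h
  simpa using h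

/-- The potential of a token configuration: the sum of token positions. -/
noncomputable def phi {n : ℕ} (A : Set (Fin n)) : ℤ :=
  ∑ i ∈ A.toFinite.toFinset, ((i : ℕ) : ℤ)

lemma step_phi {n : ℕ} {A B : Set (Fin n)} (h : Step (pathGraph n) A B) :
    |phi B - phi A| ≤ 1 := by
  obtain ⟨_, u, v, hadj, hAB, hBA⟩ := h
  have hu : u ∈ A \ B := hAB.ge (Set.mem_singleton u)
  have hv : v ∈ B \ A := hBA.ge (Set.mem_singleton v)
  have hB : B = insert v (A \ {u}) := by
    ext x
    have h1 := Set.ext_iff.mp hAB x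
    have h2 := Set.ext_iff.mp hBA x
    simp only [Set.mem_diff, Set.mem_singleton_iff, Set.mem_insert_iff] at h1 h2 ⊢
    by_cases hx : x = v
    · subst hx; tauto
    · tauto
  have hfs : (insert v (A \ {u})).toFinite.toFinset
      = insert v ((A.toFinite.toFinset).erase u) := by
    ext x
    simp only [Set.Finite.mem_toFinset, Set.mem_insert_iff, Set.mem_diff,
      Set.mem_singleton_iff, Finset.mem_insert, Finset.mem_erase]
    tauto
  have hvnot : v ∉ (A.toFinite.toFinset).erase u := by
    simp only [Finset.mem_erase, Set.Finite.mem_toFinset]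
    exact fun h => hv.2 h.2
  have huA : u ∈ A.toFinite.toFinset := (Set.Finite.mem_toFinset _).mpr hu.1
  have hphiB : phi B = ((v : ℕ) : ℤ) + (phi A - ((u : ℕ) : ℤ)) := by
    rw [hB]
    unfold phi
    rw [hfs, Finset.sum_insert hvnot, Finset.sum_erase_eq_sub huA]
  rw [hphiB]
  rw [pathGraph_adj] at hadj
  rcases hadj with h | h <;>
    · have hor : ((v : ℕ) : ℤ) - ((u : ℕ) : ℤ) = 1 ∨ ((v : ℕ) : ℤ) - ((u : ℕ) : ℤ) = -1 := by
        omega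
      rcases hor with h' | h' <;> rw [show ((v:ℕ):ℤ) + (phi A - ((u:ℕ):ℤ)) - phi A
        = ((v:ℕ):ℤ) - ((u:ℕ):ℤ) from by ring, h'] <;> norm_num

lemma chain_phi {n : ℕ} :
    ∀ L : List (Set (Fin n)), L.Chain' (Step (pathGraph n)) →
    ∀ a b, L.head? = some a → L.getLast? = some b →
    |phi b - phi a| ≤ ((L.length - 1 : ℕ) : ℤ)
  | [], _, a, b, ha, _ => by simp at ha
  | [x], _, a, b, ha, hb => by
      simp only [List.head?_cons, Option.some.injEq] at ha
      simp only [List.getLast?_singleton, Option.some.injEq] at hb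
      subst ha; subst hb; simp
  | x :: y :: t, hc, a, b, ha, hb => by
      simp only [List.head?_cons, Option.some.injEq] at ha
      subst ha
      unfold List.Chain' at hc; rw [List.isChain_cons_cons] at hc
      have ih := chain_phi (y :: t) hc.2 y b rfl (by rw [← hb, List.getLast?_cons_cons])
      have hstep := step_phi hc.1
      have htri : |phi b - phi x| ≤ |phi b - phi y| + |phi y - phi x| := by
        calc |phi b - phi x| = |(phi b - phi y) + (phi y - phi x)| := by ring_nf
          _ ≤ |phi b - phi y| + |phi y - phi x| := abs_add_le _ _
      have hlen : ((x :: y :: t).length - 1 : ℕ) = ((y :: t).length - 1 : ℕ) + 1 := by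
        simp [List.length_cons]
      rw [hlen]
      push_cast
      push_cast at ih
      linarith

lemma phi_image {k : ℕ} (hk : 0 < k) (f : ℕ → ℕ) (hf : ∀ j < k, f j < 8 * k)
    (hinj : ∀ a < k, ∀ b < k, f a = f b → a = b) :
    phi {i : Fin (8 * k) | ∃ j < k, (i : ℕ) = f j}
      = ∑ j ∈ Finset.range k, ((f j : ℕ) : ℤ) := by
  have hts : ({i : Fin (8 * k) | ∃ j < k, (i : ℕ) = f j}).toFinite.toFinset
      = (Finset.range k).attach.image
          (fun j => (⟨f j.1, hf j.1 (Finset.mem_range.mp j.2)⟩ : Fin (8 * k))) := by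
    ext x
    simp only [Set.Finite.mem_toFinset, Set.mem_setOf_eq, Finset.mem_image,
      Finset.mem_attach, true_and, Subtype.exists, Finset.mem_range]
    constructor
    · rintro ⟨j, hj, he⟩
      exact ⟨j, hj, Fin.ext he.symm⟩
    · rintro ⟨j, hj, he⟩
      exact ⟨j, hj, by rw [← he]⟩
  rw [phi, hts, Finset.sum_image, ← Finset.sum_attach (Finset.range k)
    (fun j => ((f j : ℕ) : ℤ))]
  intro a _ b _ h
  exact Subtype.ext (hinj a.1 (Finset.mem_range.mp a.2) b.1 (Finset.mem_range.mp b.2)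
    (by simpa using congrArg Fin.val h))

lemma phi_diff {k : ℕ} (hk : 0 < k) :
    phi {i : Fin (8 * k) | ∃ j < k, (i : ℕ) = 6 * k + 1 + 2 * j}
      - phi {i : Fin (8 * k) | ∃ j < k, (i : ℕ) = 2 * j}
      = (k : ℤ) * (6 * k + 1) := by
  rw [phi_image hk (fun j => 6 * k + 1 + 2 * j) (fun j hj => by omega)
        (fun a _ b _ h => by omega),
      phi_image hk (fun j => 2 * j) (fun j hj => by omega)
        (fun a _ b _ h => by omega),
      ← Finset.sum_sub_distrib]
  have hcongr : ∀ j ∈ Finset.range k,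
      (((6 * k + 1 + 2 * j : ℕ) : ℤ) - ((2 * j : ℕ) : ℤ)) = ((6 * k + 1 : ℕ) : ℤ) := by
    intro j _; push_cast; ring
  rw [Finset.sum_congr rfl hcongr, Finset.sum_const, Finset.card_range]
  push_cast; ring

end PQLB

theorem path_quadratic_lower_bound :
    ∃ c : ℕ, 0 < c ∧ ∀ k : ℕ, 0 < k →
      Reconf (SimpleGraph.pathGraph (8 * k))
        {i : Fin (8 * k) | ∃ j < k, (i : ℕ) = 2 * j}
        {i : Fin (8 * k) | ∃ j < k, (i : ℕ) = 6 * k + 1 + 2 * j} ∧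
      ∀ L : List (Set (Fin (8 * k))),
        L.Chain' (Step (SimpleGraph.pathGraph (8 * k))) →
        L.head? = some {i : Fin (8 * k) | ∃ j < k, (i : ℕ) = 2 * j} →
        L.getLast? = some {i : Fin (8 * k) | ∃ j < k, (i : ℕ) = 6 * k + 1 + 2 * j} →
        k ^ 2 ≤ c * (L.length - 1) := by
  refine ⟨1, one_pos, fun k hk => ⟨PQLB.reconf_final hk, fun L hc h1 h2 => ?_⟩⟩
  have hbound := PQLB.chain_phi L hc _ _ h1 h2
  rw [PQLB.phi_diff hk] at hbound
  have habs : |(k : ℤ) * (6 * k + 1)| = (k : ℤ) * (6 * k + 1) :=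
    abs_of_nonneg (by positivity)
  rw [habs] at hbound
  have hnat : k * (6 * k + 1) ≤ L.length - 1 := by exact_mod_cast hbound
  calc k ^ 2 ≤ k * (6 * k + 1) := by nlinarith
    _ ≤ L.length - 1 := hnat
    _ = 1 * (L.length - 1) := (one_mul _).symm
end
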